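/- arXiv:2405.16490 — 3 statements merged into one kernel-verified Lean document; each statement's English description precedes it below -/
import Mathlib

section
/- Any deterministic policy is specifiable: for every deterministic policy π there exists a teleo-environment ε such that π is the unique optimal policy for ε. -/
open scoped ENNReal BigOperators

structure Transducer (I O : Type) [Fintype O] where
  State : Type
  init : State
  out : State → O → ℝ≥0∞
  out_sum : ∀ st, ∑ o, out st o = 1
  step : State → I → O → State

namespace Transducer

variable {I O : Type} [Fintype O]

/-- The transducer evolved by a single input-output pair. -/
def evolve (t : Transducer I O) (i : I) (o : O) : Transducer I O :=
  { t with init := t.step t.init i o }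

def stepSeq (t : Transducer I O) : t.State → List (I × O) → t.State
  | st, [] => st
  | st, p :: rest => t.stepSeq (t.step st p.1 p.2) rest

/-- The transducer evolved along a finite sequence of input-output pairs. -/
def evolveSeq (t : Transducer I O) (l : List (I × O)) : Transducer I O :=
  { t with init := t.stepSeq t.init l }

/-- Induced behaviour: conditional probability of an output sequence given an
input sequence of the same length. -/
noncomputable def beh : Transducer I O → List I → List O → ℝ≥0∞
  | _, [], [] => 1
  | t, i :: is, o :: os => t.out t.init o * beh (t.evolve i o) is os
  | _, _, _ => 0

/-- Behavioural equality of transducers. -/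
def BehEq (t u : Transducer I O) : Prop :=
  ∀ is os, t.beh is os = u.beh is os

/-- States reachable from the initial state along possible transitions. -/
inductive Reachable (t : Transducer I O) : t.State → Prop
  | init : Reachable t t.init
  | step {st : t.State} (i : I) (o : O) :
      Reachable t st → t.out st o ≠ 0 → Reachable t (t.step st i o)

/-- A transducer is deterministic if every reachable output distribution is a
point mass. -/
def Deterministic (t : Transducer I O) : Prop :=
  ∀ st, t.Reachable st → ∃ o, t.out st o = 1

end Transducer

/-- A policy: a transducer from sensor values to actions. -/
abbrev Policy (S A : Type) [Fintype A] := Transducer S A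

/-- A teleo-environment: a transducer from actions to pairs of a sensor value
and a success signal (`true` = success ⊤, `false` = ⊥). -/
abbrev Env (S A : Type) [Fintype S] := Transducer A (S × Bool)

section Value

variable {S A : Type} [Fintype S] [Fintype A]

/-- Probability that success occurs at least once within the first `n` steps of
the coupled process of a policy and a teleo-environment. -/
noncomputable def succProb : ℕ → Policy S A → Env S A → ℝ≥0∞
  | 0, _, _ => 0
  | n + 1, π, ε =>
      ∑ a : A, ∑ p : S × Bool,
        π.out π.init a * ε.out ε.init p *
          (if p.2 then 1 else succProb n (π.evolve p.1 a) (ε.evolve a p))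

/-- The value of a policy in a teleo-environment: the probability that success
occurs at least once in the coupled process. -/
noncomputable def value (π : Policy S A) (ε : Env S A) : ℝ≥0∞ :=
  ⨆ n, succProb n π ε

/-- A policy is optimal for a teleo-environment if its value is maximal among
all policies. -/
def Optimal (π : Policy S A) (ε : Env S A) : Prop :=
  ∀ π' : Policy S A, value π' ε ≤ value π ε

/-- A policy is uniquely optimal if it is optimal and every optimal policy is
behaviourally equal to it. -/
def UniquelyOptimal (π : Policy S A) (ε : Env S A) : Prop :=
  Optimal π ε ∧ ∀ π' : Policy S A, Optimal π' ε → π'.BehEq π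

/-- Probability of a finite interaction history (action, sensor value, success
signal per step) in the coupled process. -/
noncomputable def trajProbG : Policy S A → Env S A → List ((A × S) × Bool) → ℝ≥0∞
  | _, _, [] => 1
  | π, ε, (p, g) :: rest =>
      π.out π.init p.1 * ε.out ε.init (p.2, g) *
        trajProbG (π.evolve p.2 p.1) (ε.evolve p.1 (p.2, g)) rest

/-- A finite action-sensor history occurs with positive probability in the
coupled process (marginalising over the unobserved success signals). -/
def PosProb (π : Policy S A) (ε : Env S A) (h : List (A × S)) : Prop :=
  ∃ l : List ((A × S) × Bool), l.map Prod.fst = h ∧ trajProbG π ε l ≠ 0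

/-- The policy evolved along an action-sensor history (inputs are the sensor
values, outputs the actions). -/
def Policy.evolveBy (π : Policy S A) (h : List (A × S)) : Policy S A :=
  Transducer.evolveSeq π (h.map fun p => (p.2, p.1))

/-- Value-laden filtering: the environment evolved along the actions and sensor
values, with every success signal set to ⊥ (no success). -/
def Env.vlEvolveBy (ε : Env S A) (h : List (A × S)) : Env S A :=
  Transducer.evolveSeq ε (h.map fun p => (p.1, (p.2, false)))

end Value

lemma cardS_ne_zero {S : Type} [Fintype S] [Nonempty S] :
    (Fintype.card S : ℝ≥0∞) ≠ 0 :=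
  Nat.cast_ne_zero.mpr Fintype.card_ne_zero

lemma cardS_ne_top {S : Type} [Fintype S] : (Fintype.card S : ℝ≥0∞) ≠ ⊤ :=
  ENNReal.natCast_ne_top _

section SpecAux

open Transducer

variable {S A : Type} [Fintype S] [Fintype A] [Nonempty S] [Nonempty A]

/-- Auxiliary: in a point-mass output distribution, other outputs have
probability zero. -/
lemma out_eq_zero_of_out_eq_one {I O : Type} [Fintype O] (t : Transducer I O)
    {st : t.State} {a : O} (h : t.out st a = 1) {b : O} (hb : b ≠ a) :
    t.out st b = 0 := by
  classical
  have hsum := t.out_sum st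
  rw [← Finset.add_sum_erase _ _ (Finset.mem_univ a), h] at hsum
  have h0 : ∑ o ∈ Finset.univ.erase a, t.out st o = 0 := by
    have : (1 : ℝ≥0∞) + ∑ o ∈ Finset.univ.erase a, t.out st o = 1 + 0 := by
      rw [add_zero]; exact hsum
    exact (ENNReal.add_right_inj ENNReal.one_ne_top).mp this
  exact (Finset.sum_eq_zero_iff.mp h0) b (Finset.mem_erase.mpr ⟨hb, Finset.mem_univ b⟩)

/-- The action chosen by a (deterministic) policy at a state. -/
noncomputable def detAct (π : Policy S A) (st : π.State) : A :=
  if h : ∃ a, π.out st a = 1 then h.choose else Classical.arbitrary A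

lemma detAct_spec (π : Policy S A) (hdet : π.Deterministic) {st : π.State}
    (h : π.Reachable st) : π.out st (detAct π st) = 1 := by
  have hex := hdet st h
  rw [detAct, dif_pos hex]
  exact hex.choose_spec

open Classical in
/-- Step function of the specifying environment. -/
noncomputable def specStep (π : Policy S A) :
    Option (π.State × Bool) → A → (S × Bool) → Option (π.State × Bool)
  | none, _, _ => none
  | some (st, _), a, p =>
      if a = detAct π st then some (π.step st p.1 a, true) else none

/-- Output distribution of the specifying environment. -/
noncomputable def specOut (π : Policy S A) :
    Option (π.State × Bool) → (S × Bool) → ℝ≥0∞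
  | none, p => if p.2 then 0 else (Fintype.card S : ℝ≥0∞)⁻¹
  | some (_, b), p =>
      if b then (2 * (Fintype.card S : ℝ≥0∞))⁻¹
      else if p.2 then 0 else (Fintype.card S : ℝ≥0∞)⁻¹

lemma specOut_sum (π : Policy S A) (x : Option (π.State × Bool)) :
    ∑ p : S × Bool, specOut π x p = 1 := by
  have hfalse : ∑ p : S × Bool,
      (if p.2 then 0 else (Fintype.card S : ℝ≥0∞)⁻¹) = 1 := by
    rw [Fintype.sum_prod_type]
    simp only [Fintype.sum_bool, if_true, cond_false, Bool.false_eq_true, if_false,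
      zero_add, Finset.sum_const, Finset.card_univ, nsmul_eq_mul]
    exact ENNReal.mul_inv_cancel cardS_ne_zero cardS_ne_top
  obtain (_ | ⟨st, _ | _⟩) := x
  · simpa [specOut] using hfalse
  · simpa [specOut] using hfalse
  · simp only [specOut, if_true, Finset.sum_const, Finset.card_univ, Fintype.card_prod,
      Fintype.card_bool, nsmul_eq_mul]
    rw [show ((Fintype.card S * 2 : ℕ) : ℝ≥0∞) = 2 * (Fintype.card S : ℝ≥0∞) by
      push_cast; ring]
    exact ENNReal.mul_inv_cancel
      (mul_ne_zero two_ne_zero cardS_ne_zero)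
      (ENNReal.mul_ne_top ENNReal.ofNat_ne_top cardS_ne_top)

/-- The specifying environment for a deterministic policy, with initial
state `x`. -/
noncomputable def specEnv (π : Policy S A) (x : Option (π.State × Bool)) : Env S A where
  State := Option (π.State × Bool)
  init := x
  out := specOut π
  out_sum := specOut_sum π
  step := specStep π

lemma specEnv_evolve (π : Policy S A) (x : Option (π.State × Bool)) (a : A)
    (p : S × Bool) : (specEnv π x).evolve a p = specEnv π (specStep π x a p) := rfl

lemma succProb_succ_spec (n : ℕ) (ρ : Policy S A) (π : Policy S A)
    (x : Option (π.State × Bool)) :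
    succProb (n + 1) ρ (specEnv π x) =
      ∑ a : A, ∑ p : S × Bool, ρ.out ρ.init a * specOut π x p *
        (if p.2 then 1 else
          succProb n (ρ.evolve p.1 a) (specEnv π (specStep π x a p))) := rfl

lemma succProb_mono_step (n : ℕ) :
    ∀ (ρ : Policy S A) (ε : Env S A), succProb n ρ ε ≤ succProb (n + 1) ρ ε := by
  induction n with
  | zero => intro ρ ε; exact zero_le
  | succ n ih =>
      intro ρ ε
      rw [succProb, succProb]
      refine Finset.sum_le_sum fun a _ => Finset.sum_le_sum fun p _ => ?_
      refine mul_le_mul_right ?_ _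
      split
      · exact le_rfl
      · exact ih _ _

lemma succProb_monotone (ρ : Policy S A) (ε : Env S A) :
    Monotone fun n => succProb n ρ ε :=
  monotone_nat_of_le_succ fun n => succProb_mono_step n ρ ε

lemma succProb_le_one (n : ℕ) :
    ∀ (ρ : Policy S A) (ε : Env S A), succProb n ρ ε ≤ 1 := by
  induction n with
  | zero => intro ρ ε; exact zero_le
  | succ n ih =>
      intro ρ ε
      rw [succProb]
      calc ∑ a : A, ∑ p : S × Bool, ρ.out ρ.init a * ε.out ε.init p *
            (if p.2 then 1 else succProb n (ρ.evolve p.1 a) (ε.evolve a p))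
          ≤ ∑ a : A, ∑ p : S × Bool, ρ.out ρ.init a * ε.out ε.init p := by
            refine Finset.sum_le_sum fun a _ => Finset.sum_le_sum fun p _ => ?_
            calc ρ.out ρ.init a * ε.out ε.init p *
                  (if p.2 then 1 else succProb n (ρ.evolve p.1 a) (ε.evolve a p))
                ≤ ρ.out ρ.init a * ε.out ε.init p * 1 := by
                  refine mul_le_mul_right ?_ _
                  split
                  · exact le_rfl
                  · exact ih _ _
              _ = ρ.out ρ.init a * ε.out ε.init p := mul_one _
        _ = ∑ a : A, ρ.out ρ.init a * ∑ p : S × Bool, ε.out ε.init p := by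
            simp [Finset.mul_sum]
        _ = 1 := by simp [ε.out_sum, ρ.out_sum]

lemma value_le_one (ρ : Policy S A) (ε : Env S A) : value ρ ε ≤ 1 :=
  iSup_le fun n => succProb_le_one n ρ ε

lemma succProb_dead (n : ℕ) (π : Policy S A) :
    ∀ ρ : Policy S A, succProb n ρ (specEnv π none) = 0 := by
  induction n with
  | zero => intro ρ; rfl
  | succ n ih =>
      intro ρ
      rw [succProb_succ_spec]
      refine Finset.sum_eq_zero fun a _ => Finset.sum_eq_zero fun p _ => ?_
      obtain ⟨s, (_ | _)⟩ := p
      · simp [specOut, specStep, ih]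
      · simp [specOut]

lemma card_mul_two_card_inv :
    (Fintype.card S : ℝ≥0∞) * (2 * (Fintype.card S : ℝ≥0∞))⁻¹ = 2⁻¹ := by
  rw [ENNReal.mul_inv (Or.inl two_ne_zero) (Or.inl ENNReal.ofNat_ne_top), mul_comm,
    mul_assoc, ENNReal.inv_mul_cancel cardS_ne_zero cardS_ne_top, mul_one]

lemma succProb_formula (n : ℕ) (π ρ : Policy S A) (st : π.State) (b : Bool) :
    succProb (n + 1) ρ (specEnv π (some (st, b))) =
      (if b then 2⁻¹ else 0) +
      (if b then (2 * (Fintype.card S : ℝ≥0∞))⁻¹ else (Fintype.card S : ℝ≥0∞)⁻¹) *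
        ∑ s : S, ρ.out ρ.init (detAct π st) *
          succProb n (ρ.evolve s (detAct π st))
            (specEnv π (some (π.step st s (detAct π st), true))) := by
  classical
  set c : ℝ≥0∞ := (Fintype.card S : ℝ≥0∞) with hc
  have hcoll : ∀ (s : S) (β : ℝ≥0∞), ∑ a : A,
      ρ.out ρ.init a * β *
        succProb n (ρ.evolve s a) (specEnv π (specStep π (some (st, b)) a (s, false)))
      = β * (ρ.out ρ.init (detAct π st) *
          succProb n (ρ.evolve s (detAct π st))
            (specEnv π (some (π.step st s (detAct π st), true)))) := by
    intro s β
    rw [Finset.sum_eq_single (detAct π st)]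
    · have hstep : specStep π (some (st, b)) (detAct π st) (s, false) =
        some (π.step st s (detAct π st), true) := by simp [specStep]
      rw [hstep]; ring
    · intro a _ ha
      have hstep : specStep π (some (st, b)) a (s, false) = none := by
        simp [specStep, ha]
      rw [hstep, succProb_dead, mul_zero]
    · intro h; exact absurd (Finset.mem_univ _) h
  have hout_sum := ρ.out_sum ρ.init
  cases b
  · -- b = false
    rw [succProb_succ_spec]
    have hterm : ∀ a : A, ∑ p : S × Bool, ρ.out ρ.init a * specOut π (some (st, false)) p *
        (if p.2 then 1 else
          succProb n (ρ.evolve p.1 a) (specEnv π (specStep π (some (st, false)) a p)))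
        = ∑ s : S, ρ.out ρ.init a * c⁻¹ *
            succProb n (ρ.evolve s a)
              (specEnv π (specStep π (some (st, false)) a (s, false))) := by
      intro a
      rw [Fintype.sum_prod_type]
      refine Finset.sum_congr rfl fun s _ => ?_
      rw [Fintype.sum_bool]
      simp [specOut]
      rfl
    simp only [hterm]
    have hswap : ∑ a : A, ∑ s : S, ρ.out ρ.init a * c⁻¹ *
          succProb n (ρ.evolve s a)
            (specEnv π (specStep π (some (st, false)) a (s, false)))
        = ∑ s : S, ∑ a : A, ρ.out ρ.init a * c⁻¹ *
          succProb n (ρ.evolve s a)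
            (specEnv π (specStep π (some (st, false)) a (s, false))) :=
      Finset.sum_comm
    rw [hswap]
    simp only [hcoll]
    rw [← Finset.mul_sum]
    simp
  · -- b = true
    rw [succProb_succ_spec]
    have hterm : ∀ a : A, ∑ p : S × Bool, ρ.out ρ.init a * specOut π (some (st, true)) p *
        (if p.2 then 1 else
          succProb n (ρ.evolve p.1 a) (specEnv π (specStep π (some (st, true)) a p)))
        = (∑ _s : S, ρ.out ρ.init a * (2 * c)⁻¹) +
          ∑ s : S, ρ.out ρ.init a * (2 * c)⁻¹ *
            succProb n (ρ.evolve s a)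
              (specEnv π (specStep π (some (st, true)) a (s, false))) := by
      intro a
      rw [Fintype.sum_prod_type, ← Finset.sum_add_distrib]
      refine Finset.sum_congr rfl fun s _ => ?_
      rw [Fintype.sum_bool]
      simp [specOut]
      rfl
    simp only [hterm]
    rw [Finset.sum_add_distrib]
    have hswap : ∑ a : A, ∑ s : S, ρ.out ρ.init a * (2 * c)⁻¹ *
          succProb n (ρ.evolve s a)
            (specEnv π (specStep π (some (st, true)) a (s, false)))
        = ∑ s : S, ∑ a : A, ρ.out ρ.init a * (2 * c)⁻¹ *
          succProb n (ρ.evolve s a)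
            (specEnv π (specStep π (some (st, true)) a (s, false))) :=
      Finset.sum_comm
    rw [hswap]
    simp only [hcoll]
    rw [← Finset.mul_sum]
    have hpart1 : ∑ _a : A, ∑ _s : S, ρ.out ρ.init _a * (2 * c)⁻¹ = 2⁻¹ := by
      simp only [Finset.sum_const, Finset.card_univ, nsmul_eq_mul]
      rw [← Finset.mul_sum, ← Finset.sum_mul, hout_sum, one_mul]
      exact card_mul_two_card_inv
    rw [hpart1]
    simp

lemma value_spec_succ (π ρ : Policy S A) (x : Option (π.State × Bool)) :
    value ρ (specEnv π x) = ⨆ n, succProb (n + 1) ρ (specEnv π x) := by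
  refine le_antisymm (iSup_le fun n => ?_) (iSup_le fun n => le_iSup
    (fun n => succProb n ρ (specEnv π x)) (n + 1))
  exact (succProb_mono_step n ρ _).trans
    (le_iSup (fun m => succProb (m + 1) ρ (specEnv π x)) n)

lemma value_formula (π ρ : Policy S A) (st : π.State) (b : Bool) :
    value ρ (specEnv π (some (st, b))) =
      (if b then 2⁻¹ else 0) +
      (if b then (2 * (Fintype.card S : ℝ≥0∞))⁻¹ else (Fintype.card S : ℝ≥0∞)⁻¹) *
        ∑ s : S, ρ.out ρ.init (detAct π st) *
          value (ρ.evolve s (detAct π st))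
            (specEnv π (some (π.step st s (detAct π st), true))) := by
  rw [value_spec_succ]
  simp only [succProb_formula]
  rw [← ENNReal.add_iSup, ← ENNReal.mul_iSup]
  congr 2
  have h2 := ENNReal.finsetSum_iSup_of_monotone (s := Finset.univ)
    (f := fun (s : S) (n : ℕ) => ρ.out ρ.init (detAct π st) *
      succProb n (ρ.evolve s (detAct π st))
        (specEnv π (some (π.step st s (detAct π st), true))))
    (fun s m n h => mul_le_mul_right (succProb_monotone _ _ h) _)
  rw [← h2]
  refine Finset.sum_congr rfl fun s _ => ?_
  rw [value, ENNReal.mul_iSup]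

lemma sum_eq_card_forall_eq_one {f : S → ℝ≥0∞} (hle : ∀ s, f s ≤ 1)
    (hsum : ∑ s : S, f s = (Fintype.card S : ℝ≥0∞)) : ∀ s, f s = 1 := by
  classical
  intro s0
  refine le_antisymm (hle s0) ?_
  have hsplit : f s0 + ∑ s ∈ Finset.univ.erase s0, f s = (Fintype.card S : ℝ≥0∞) := by
    rw [Finset.add_sum_erase _ _ (Finset.mem_univ s0)]; exact hsum
  have herase : ∑ s ∈ Finset.univ.erase s0, f s ≤ ((Fintype.card S - 1 : ℕ) : ℝ≥0∞) := by
    calc ∑ s ∈ Finset.univ.erase s0, f s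
        ≤ (Finset.univ.erase s0).card • (1 : ℝ≥0∞) :=
          Finset.sum_le_card_nsmul _ _ _ fun i _ => hle i
      _ = ((Fintype.card S - 1 : ℕ) : ℝ≥0∞) := by
          rw [Finset.card_erase_of_mem (Finset.mem_univ s0), Finset.card_univ,
            nsmul_eq_mul, mul_one]
  have hle' : (Fintype.card S : ℝ≥0∞) ≤ f s0 + ((Fintype.card S - 1 : ℕ) : ℝ≥0∞) := by
    rw [← hsplit]; exact add_le_add_right herase _
  have h1 : (Fintype.card S : ℝ≥0∞) - ((Fintype.card S - 1 : ℕ) : ℝ≥0∞) ≤ f s0 :=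
    tsub_le_iff_right.mpr hle'
  calc (1 : ℝ≥0∞) = ((Fintype.card S - (Fintype.card S - 1) : ℕ) : ℝ≥0∞) := by
        rw [Nat.sub_sub_self Fintype.card_pos]; norm_num
    _ = (Fintype.card S : ℝ≥0∞) - ((Fintype.card S - 1 : ℕ) : ℝ≥0∞) :=
        ENNReal.natCast_sub _ _
    _ ≤ f s0 := h1

lemma key_of_value_one (π ρ : Policy S A) (st : π.State) (b : Bool)
    (h : value ρ (specEnv π (some (st, b))) = 1) :
    ρ.out ρ.init (detAct π st) = 1 ∧ ∀ s : S,
      value (ρ.evolve s (detAct π st))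
        (specEnv π (some (π.step st s (detAct π st), true))) = 1 := by
  classical
  set c : ℝ≥0∞ := (Fintype.card S : ℝ≥0∞) with hc
  set fa := detAct π st with hfa
  set T := ∑ s : S, ρ.out ρ.init fa *
    value (ρ.evolve s fa) (specEnv π (some (π.step st s fa, true))) with hT
  rw [value_formula] at h
  have hp_le : ρ.out ρ.init fa ≤ 1 := by
    rw [← ρ.out_sum ρ.init]
    exact Finset.single_le_sum (f := fun a => ρ.out ρ.init a)
      (fun a _ => zero_le) (Finset.mem_univ fa)
  have hterm_le : ∀ s : S, ρ.out ρ.init fa *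
      value (ρ.evolve s fa) (specEnv π (some (π.step st s fa, true))) ≤ 1 := fun s =>
    mul_le_one' hp_le (value_le_one _ _)
  have hTc : T = c := by
    cases b
    · simp only [Bool.false_eq_true, if_false, zero_add, ← hT, ← hc, ← hfa] at h
      have := congrArg (fun x => c * x) h
      simpa [← mul_assoc, ENNReal.mul_inv_cancel cardS_ne_zero cardS_ne_top, ← hc,
          (ENNReal.mul_inv_cancel cardS_ne_zero cardS_ne_top : c * c⁻¹ = 1)] using this
    · simp only [if_true, ← hT, ← hc, ← hfa] at h
      have h2 : (2 * c)⁻¹ * T = 2⁻¹ := by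
        have h' : (2 : ℝ≥0∞)⁻¹ + (2 * c)⁻¹ * T = 2⁻¹ + 2⁻¹ := by
          rw [h, ENNReal.inv_two_add_inv_two]
        exact (ENNReal.add_right_inj (by simp)).mp h'
      have h3 := congrArg (fun x => (2 * c) * x) h2
      simp only [← mul_assoc] at h3
      rw [ENNReal.mul_inv_cancel (mul_ne_zero two_ne_zero cardS_ne_zero)
        (ENNReal.mul_ne_top ENNReal.ofNat_ne_top cardS_ne_top), one_mul] at h3
      rw [h3, mul_comm 2 c, mul_assoc,
        ENNReal.mul_inv_cancel two_ne_zero ENNReal.ofNat_ne_top, mul_one]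
  have hall : ∀ s : S, ρ.out ρ.init fa *
      value (ρ.evolve s fa) (specEnv π (some (π.step st s fa, true))) = 1 :=
    sum_eq_card_forall_eq_one hterm_le (by rw [← hT, hTc, hc])
  obtain ⟨s0⟩ := (inferInstance : Nonempty S)
  have hp1 : ρ.out ρ.init fa = 1 := by
    refine le_antisymm hp_le ?_
    calc (1 : ℝ≥0∞) = _ := (hall s0).symm
      _ ≤ ρ.out ρ.init fa * 1 := mul_le_mul_right (value_le_one _ _) _
      _ = ρ.out ρ.init fa := mul_one _
  refine ⟨hp1, fun s => ?_⟩
  have := hall s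
  rw [hp1, one_mul] at this
  exact this

lemma one_le_iSup_one_sub_pow : (1 : ℝ≥0∞) ≤ ⨆ n : ℕ, (1 - 2⁻¹ ^ n) := by
  set a := ⨆ n : ℕ, (1 - 2⁻¹ ^ n : ℝ≥0∞) with ha
  rw [← tsub_eq_zero_iff_le]
  by_contra h0
  obtain ⟨n, hn⟩ := ENNReal.exists_inv_two_pow_lt h0
  have hle : 1 - a ≤ 2⁻¹ ^ n := by
    calc (1 : ℝ≥0∞) - a ≤ 1 - (1 - 2⁻¹ ^ n) :=
          tsub_le_tsub_left (le_iSup (fun n : ℕ => (1 - 2⁻¹ ^ n : ℝ≥0∞)) n) 1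
      _ = 2⁻¹ ^ n := ENNReal.sub_sub_cancel ENNReal.one_ne_top
          (pow_le_one' (by norm_num) n)
  exact absurd hle (not_le.mpr hn)


lemma succProb_pi_lower (π : Policy S A) (hdet : π.Deterministic) (n : ℕ) :
    ∀ st : π.State, π.Reachable st →
      1 - 2⁻¹ ^ n ≤ succProb n ({π with init := st} : Policy S A)
        (specEnv π (some (st, true))) := by
  induction n with
  | zero => intro st _; simp [succProb]
  | succ n ih =>
      intro st hst
      rw [succProb_formula, if_pos rfl, if_pos rfl]
      set c : ℝ≥0∞ := (Fintype.card S : ℝ≥0∞) with hc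
      set fa := detAct π st with hfa
      have hout : ({π with init := st} : Policy S A).out
          ({π with init := st} : Policy S A).init fa = 1 := detAct_spec π hdet hst
      have hterm : ∀ s : S, (1 : ℝ≥0∞) - 2⁻¹ ^ n ≤
          ({π with init := st} : Policy S A).out
            ({π with init := st} : Policy S A).init fa *
          succProb n (({π with init := st} : Policy S A).evolve s fa)
            (specEnv π (some (π.step st s fa, true))) := by
        intro s
        rw [hout, one_mul]
        exact ih (π.step st s fa)
          (Transducer.Reachable.step s fa hst (by rw [detAct_spec π hdet hst]; exact one_ne_zero))
      have hsum : c * (1 - 2⁻¹ ^ n) ≤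
          ∑ s : S, ({π with init := st} : Policy S A).out
            ({π with init := st} : Policy S A).init fa *
          succProb n (({π with init := st} : Policy S A).evolve s fa)
            (specEnv π (some (π.step st s fa, true))) := by
        calc c * (1 - 2⁻¹ ^ n) = ∑ _s : S, ((1 : ℝ≥0∞) - 2⁻¹ ^ n) := by
              rw [Finset.sum_const, Finset.card_univ, nsmul_eq_mul, hc]
          _ ≤ _ := Finset.sum_le_sum fun s _ => hterm s
      have hmain : (2 : ℝ≥0∞)⁻¹ + 2⁻¹ * (1 - 2⁻¹ ^ n) ≤ 2⁻¹ + (2 * c)⁻¹ *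
          ∑ s : S, ({π with init := st} : Policy S A).out
            ({π with init := st} : Policy S A).init fa *
          succProb n (({π with init := st} : Policy S A).evolve s fa)
            (specEnv π (some (π.step st s fa, true))) := by
        refine add_le_add_right ?_ _
        have heq : (2 : ℝ≥0∞)⁻¹ * (1 - 2⁻¹ ^ n) = (2 * c)⁻¹ * (c * (1 - 2⁻¹ ^ n)) := by
          rw [← mul_assoc, mul_comm ((2 * c)⁻¹) c, card_mul_two_card_inv]
        rw [heq]
        exact mul_le_mul_right hsum _
      refine le_trans ?_ hmain
      have hx : (2 : ℝ≥0∞)⁻¹ * (1 - 2⁻¹ ^ n) + 2⁻¹ ^ (n + 1) = 2⁻¹ := by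
        rw [pow_succ, mul_comm ((2 : ℝ≥0∞)⁻¹ ^ n) 2⁻¹, ← mul_add,
          tsub_add_cancel_of_le (pow_le_one' (by norm_num) n), mul_one]
      refine tsub_le_iff_right.mpr (le_of_eq ?_)
      calc (1 : ℝ≥0∞) = 2⁻¹ + 2⁻¹ := ENNReal.inv_two_add_inv_two.symm
        _ = 2⁻¹ + (2⁻¹ * (1 - 2⁻¹ ^ n) + 2⁻¹ ^ (n + 1)) := by rw [hx]
        _ = 2⁻¹ + 2⁻¹ * (1 - 2⁻¹ ^ n) + 2⁻¹ ^ (n + 1) := (add_assoc _ _ _).symm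

lemma value_pi_one (π : Policy S A) (hdet : π.Deterministic) {st : π.State}
    (hst : π.Reachable st) :
    value ({π with init := st} : Policy S A) (specEnv π (some (st, true))) = 1 := by
  refine le_antisymm (value_le_one _ _) ?_
  refine le_trans one_le_iSup_one_sub_pow (iSup_le fun n => ?_)
  exact le_trans (succProb_pi_lower π hdet n st hst)
    (le_iSup (fun n => succProb n ({π with init := st} : Policy S A)
      (specEnv π (some (st, true)))) n)

lemma value_pi_init (π : Policy S A) (hdet : π.Deterministic) :
    value π (specEnv π (some (π.init, false))) = 1 := by
  rw [value_formula π π π.init false]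
  have hout : π.out π.init (detAct π π.init) = 1 :=
    detAct_spec π hdet Transducer.Reachable.init
  have hval : ∀ s : S, value (π.evolve s (detAct π π.init))
      (specEnv π (some (π.step π.init s (detAct π π.init), true))) = 1 := by
    intro s
    have hr : π.Reachable (π.step π.init s (detAct π π.init)) :=
      Transducer.Reachable.step s _ Transducer.Reachable.init
        (by rw [hout]; exact one_ne_zero)
    exact value_pi_one π hdet hr
  simp only [hout, hval, one_mul, mul_one, Finset.sum_const, Finset.card_univ,
    nsmul_eq_mul, Bool.false_eq_true, if_false, zero_add]
  exact ENNReal.inv_mul_cancel cardS_ne_zero cardS_ne_top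

lemma beh_agree (π : Policy S A) (hdet : π.Deterministic) :
    ∀ (is : List S) (ρ : Policy S A) (st : π.State),
      π.Reachable st → ρ.out ρ.init (detAct π st) = 1 →
      (∀ s : S, value (ρ.evolve s (detAct π st))
        (specEnv π (some (π.step st s (detAct π st), true))) = 1) →
      ∀ os : List A, ρ.beh is os = ({π with init := st} : Policy S A).beh is os := by
  intro is
  induction is with
  | nil =>
      intro ρ st _ _ _ os
      cases os <;> rfl
  | cons i is ih =>
      intro ρ st hst hρ hval os
      cases os with
      | nil => rfl
      | cons o os =>
          have hπout : π.out st (detAct π st) = 1 := detAct_spec π hdet hst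
          show ρ.out ρ.init o * (ρ.evolve i o).beh is os
              = π.out st o * (({π with init := st} : Policy S A).evolve i o).beh is os
          by_cases ho : o = detAct π st
          · subst ho
            rw [hρ]
            rw [show π.out st (detAct π st) = 1 from hπout, one_mul, one_mul]
            have hreach : π.Reachable (π.step st i (detAct π st)) :=
              Transducer.Reachable.step i _ hst (by rw [hπout]; exact one_ne_zero)
            obtain ⟨h1, h2⟩ := key_of_value_one π (ρ.evolve i (detAct π st))
              (π.step st i (detAct π st)) true (hval i)
            have hev : (({π with init := st} : Policy S A).evolve i (detAct π st))
                = ({π with init := π.step st i (detAct π st)} : Policy S A) := rfl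
            rw [hev]
            exact ih (ρ.evolve i (detAct π st)) (π.step st i (detAct π st)) hreach h1 h2 os
          · rw [out_eq_zero_of_out_eq_one ρ hρ ho, out_eq_zero_of_out_eq_one π hπout ho,
              zero_mul, zero_mul]

end SpecAux

/-- **Deterministic policies are specifiable.** For every deterministic policy
`π` there exists a teleo-environment for which `π` is uniquely optimal (optimal,
and every optimal policy is behaviourally equal to `π`). -/
theorem deterministic_implies_specifiable
    {S A : Type} [Fintype S] [Fintype A] [Nonempty S] [Nonempty A]
    (π : Policy S A) (hdet : π.Deterministic) :
    ∃ ε : Env S A, UniquelyOptimal π ε := by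
  classical
  refine ⟨specEnv π (some (π.init, false)), ?_, ?_⟩
  · intro π'
    rw [value_pi_init π hdet]
    exact value_le_one _ _
  · intro π' hopt
    have hval1 : value π' (specEnv π (some (π.init, false))) = 1 := by
      refine le_antisymm (value_le_one _ _) ?_
      have h := hopt π
      rw [value_pi_init π hdet] at h
      exact h
    obtain ⟨h1, h2⟩ := key_of_value_one π π' π.init false hval1
    intro is os
    exact beh_agree π hdet is π' π.init Transducer.Reachable.init h1 h2 os
end

section
/- Any specifiable policy is deterministic: if a policy π is the unique optimal policy for some teleo-environment ε, then π is deterministic. -/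
open scoped ENNReal BigOperators

section Aux
open Transducer

variable {S A : Type} [Fintype S] [Fintype A]

lemma tr_out_le_one {I O : Type} [Fintype O] (t : Transducer I O) (st : t.State) (o : O) :
    t.out st o ≤ 1 := by
  conv_rhs => rw [← t.out_sum st]
  exact Finset.single_le_sum (fun _ _ => zero_le) (Finset.mem_univ o)

lemma tr_out_ne_top {I O : Type} [Fintype O] (t : Transducer I O) (st : t.State) (o : O) :
    t.out st o ≠ ⊤ := fun h => by simpa [h] using tr_out_le_one t st o

lemma beh_nil {I O : Type} [Fintype O] (t : Transducer I O) : t.beh [] [] = 1 := rfl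

lemma beh_cons {I O : Type} [Fintype O] (t : Transducer I O) (i : I) (o : O) (is os) :
    t.beh (i :: is) (o :: os) = t.out t.init o * (t.evolve i o).beh is os := rfl

lemma beh_single {I O : Type} [Fintype O] (t : Transducer I O) (i : I) (o : O) :
    t.beh [i] [o] = t.out t.init o := by
  rw [beh_cons, beh_nil, mul_one]

lemma stepSeq_set_init {I O : Type} [Fintype O] (t : Transducer I O) (x : t.State) :
    ∀ (l : List (I × O)) (st : t.State),
      Transducer.stepSeq { t with init := x } st l = t.stepSeq st l := by
  intro l
  induction l with
  | nil => intro st; rfl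
  | cons p rest ih => intro st; exact ih (t.step st p.1 p.2)

lemma succ_eq : ∀ (n : ℕ) (π : Policy S A) (ε : Env S A), succProb (n+1) π ε =
    ∑ a : A, ∑ p : S × Bool,
        π.out π.init a * ε.out ε.init p *
          (if p.2 then 1 else succProb n (π.evolve p.1 a) (ε.evolve a p)) := fun _ _ _ => rfl

end Aux
set_option linter.unusedSectionVars false
section Aux2
open Transducer

variable {S A : Type} [Fintype S] [Fintype A]

lemma succProb_le_succ : ∀ (n : ℕ) (π : Policy S A) (ε : Env S A),
    succProb n π ε ≤ succProb (n + 1) π ε := by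
  intro n
  induction n with
  | zero => intro π ε; exact zero_le
  | succ n ih =>
    intro π ε
    rw [succ_eq, succ_eq]
    refine Finset.sum_le_sum fun a _ => Finset.sum_le_sum fun p _ => ?_
    refine mul_le_mul_right ?_ _
    by_cases hp : p.2
    · simp [hp]
    · simp only [hp, if_false]; exact ih _ _

lemma succProb_mono (π : Policy S A) (ε : Env S A) :
    Monotone (fun n => succProb n π ε) :=
  monotone_nat_of_le_succ fun n => succProb_le_succ n π ε

lemma value_succ (π : Policy S A) (ε : Env S A) :
    value π ε = ∑ a : A, ∑ p : S × Bool,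
      π.out π.init a * ε.out ε.init p *
        (if p.2 then 1 else value (π.evolve p.1 a) (ε.evolve a p)) := by
  have h1 : value π ε = ⨆ n, succProb (n + 1) π ε := by
    refine le_antisymm (iSup_le fun n => le_iSup_of_le n (succProb_le_succ n π ε)) ?_
    exact iSup_le fun n => le_iSup (fun n => succProb n π ε) (n + 1)
  have hmono : ∀ (a : A) (p : S × Bool), Monotone (fun n =>
      π.out π.init a * ε.out ε.init p *
        (if p.2 then 1 else succProb n (π.evolve p.1 a) (ε.evolve a p))) := by
    intro a p m n hmn
    refine mul_le_mul_right ?_ _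
    by_cases hp : p.2
    · simp [hp]
    · simp only [hp, if_false]; exact succProb_mono _ _ hmn
  rw [h1]
  simp only [succ_eq]
  rw [← ENNReal.finsetSum_iSup_of_monotone
    (fun a m n hmn => Finset.sum_le_sum (fun p _ => hmono a p hmn))]
  refine Finset.sum_congr rfl fun a _ => ?_
  rw [← ENNReal.finsetSum_iSup_of_monotone (fun p => hmono a p)]
  refine Finset.sum_congr rfl fun p _ => ?_
  rw [← ENNReal.mul_iSup]
  congr 1
  by_cases hp : p.2
  · simp [hp]
  · simp only [hp, if_false]; rfl

lemma beh_hom {I O : Type} [Fintype O] (t u : Transducer I O) (f : t.State → u.State)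
    (hout : ∀ s o, u.out (f s) o = t.out s o)
    (hstep : ∀ s i o, u.step (f s) i o = f (t.step s i o)) :
    ∀ (is : List I) (os : List O) (s : t.State),
      Transducer.beh { u with init := f s } is os = Transducer.beh { t with init := s } is os := by
  intro is
  induction is with
  | nil => intro os s; cases os <;> rfl
  | cons i is ih =>
    intro os s
    cases os with
    | nil => rfl
    | cons o os =>
      rw [beh_cons, beh_cons]
      show u.out (f s) o * Transducer.beh { u with init := u.step (f s) i o } is os
         = t.out s o * Transducer.beh { t with init := t.step s i o } is os
      rw [hout, hstep]
      exact congrArg _ (ih os (t.step s i o))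

lemma behEq_hom {I O : Type} [Fintype O] {t u : Transducer I O} (f : t.State → u.State)
    (hinit : u.init = f t.init)
    (hout : ∀ s o, u.out (f s) o = t.out s o)
    (hstep : ∀ s i o, u.step (f s) i o = f (t.step s i o)) :
    Transducer.BehEq u t := by
  intro is os
  have h := beh_hom t u f hout hstep is os t.init
  have hu : ({ u with init := f t.init } : Transducer I O) = u := by rw [← hinit]
  rw [hu] at h
  exact h

lemma nonempty_S (ε : Env S A) : Nonempty S := by
  by_contra hS
  haveI : IsEmpty S := not_nonempty_iff.mp hS
  have h := ε.out_sum ε.init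
  rw [Finset.univ_eq_empty, Finset.sum_empty] at h
  exact zero_ne_one h

lemma nonempty_A (π : Policy S A) : Nonempty A := by
  by_contra hA
  haveI : IsEmpty A := not_nonempty_iff.mp hA
  have h := π.out_sum π.init
  rw [Finset.univ_eq_empty, Finset.sum_empty] at h
  exact zero_ne_one h

lemma out_eq_of_behEq [Nonempty S] {π₁ π₂ : Policy S A} (h : π₁.BehEq π₂) (a : A) :
    π₁.out π₁.init a = π₂.out π₂.init a := by
  obtain ⟨i⟩ := ‹Nonempty S›
  have h2 := h [i] [a]
  rwa [beh_single, beh_single] at h2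

lemma behEq_evolve {π₁ π₂ : Policy S A} (h : π₁.BehEq π₂) (i : S) (a : A)
    (ha : π₁.out π₁.init a ≠ 0) : (π₁.evolve i a).BehEq (π₂.evolve i a) := by
  intro is os
  have h2 := h (i :: is) (a :: os)
  rw [beh_cons, beh_cons] at h2
  haveI : Nonempty S := ⟨i⟩
  rw [← out_eq_of_behEq h a] at h2
  exact (ENNReal.mul_right_strictMono ha (tr_out_ne_top π₁ π₁.init a)).injective h2

lemma succProb_congr : ∀ (n : ℕ) (π₁ π₂ : Policy S A) (ε : Env S A), π₁.BehEq π₂ →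
    succProb n π₁ ε = succProb n π₂ ε := by
  intro n
  induction n with
  | zero => intros; rfl
  | succ n ih =>
    intro π₁ π₂ ε h
    haveI : Nonempty S := nonempty_S ε
    rw [succ_eq, succ_eq]
    refine Finset.sum_congr rfl fun a _ => Finset.sum_congr rfl fun p _ => ?_
    by_cases ha : π₁.out π₁.init a = 0
    · have ha2 : π₂.out π₂.init a = 0 := (out_eq_of_behEq h a) ▸ ha
      simp [ha, ha2]
    · rw [out_eq_of_behEq h a]
      congr 1
      by_cases hp : p.2
      · simp [hp]
      · simp only [hp, if_false]
        exact ih _ _ _ (behEq_evolve h p.1 a ha)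

lemma value_congr {π₁ π₂ : Policy S A} (ε : Env S A) (h : π₁.BehEq π₂) :
    value π₁ ε = value π₂ ε :=
  iSup_congr fun n => succProb_congr n _ _ _ h

lemma value_hom {π πb : Policy S A} (f : π.State → πb.State)
    (hinit : πb.init = f π.init)
    (hout : ∀ s a, πb.out (f s) a = π.out s a)
    (hstep : ∀ s i a, πb.step (f s) i a = f (π.step s i a)) (ε : Env S A) :
    value πb ε = value π ε :=
  value_congr ε (behEq_hom f hinit hout hstep)

end Aux2
set_option linter.unusedSectionVars false
section Aux3
open Transducer

variable {S A : Type} [Fintype S] [Fintype A]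

/-- Q-value of action `a` at the history node `P`. -/
noncomputable def nodeQ (π : Policy S A) (ε : Env S A) (P : List (A × S)) (a : A) : ℝ≥0∞ :=
  ∑ p : S × Bool, (ε.vlEvolveBy P).out (ε.vlEvolveBy P).init p *
    (if p.2 then 1 else
      value ((π.evolveBy P).evolve p.1 a) ((ε.vlEvolveBy P).evolve a p))

lemma nodeQ_nil (π : Policy S A) (ε : Env S A) (a : A) :
    nodeQ π ε [] a = ∑ p : S × Bool, ε.out ε.init p *
      (if p.2 then 1 else value (π.evolve p.1 a) (ε.evolve a p)) := rfl

lemma nodeQ_cons (π : Policy S A) (ε : Env S A) (a₁ : A) (s₁ : S) (P : List (A × S)) (a : A) :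
    nodeQ π ε ((a₁, s₁) :: P) a =
      nodeQ (π.evolve s₁ a₁) (ε.evolve a₁ (s₁, false)) P a := by
  simp only [nodeQ, Policy.evolveBy, Env.vlEvolveBy, Transducer.evolveSeq, List.map_cons,
    Transducer.stepSeq, Transducer.evolve, stepSeq_set_init]

lemma value_eq_sum_nodeQ (π : Policy S A) (ε : Env S A) :
    value π ε = ∑ a : A, π.out π.init a * nodeQ π ε [] a := by
  rw [value_succ]
  refine Finset.sum_congr rfl fun a _ => ?_
  rw [nodeQ_nil, Finset.mul_sum]
  exact Finset.sum_congr rfl fun p _ => mul_assoc _ _ _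

open Classical in
/-- `π` with the first output distribution replaced by a point mass at `a₀`. -/
noncomputable def prependA (π : Policy S A) (a₀ : A) : Policy S A where
  State := Option π.State
  init := none
  out := fun st a => st.elim (if a = a₀ then 1 else 0) (fun s => π.out s a)
  out_sum := by
    rintro (_ | s)
    · simp
    · exact π.out_sum s
  step := fun st i a => st.elim (some (π.step π.init i a)) (fun s => some (π.step s i a))

open Classical in
/-- `π` spliced with `π''` on the branch where the first sensor value is `s₁`
and the first action is `a₁`. -/
noncomputable def spliceCons (π π'' : Policy S A) (s₁ : S) (a₁ : A) : Policy S A where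
  State := Option (π''.State ⊕ π.State)
  init := none
  out := fun st a => st.elim (π.out π.init a)
      (Sum.elim (fun s => π''.out s a) (fun s => π.out s a))
  out_sum := by
    rintro (_ | s | s)
    · exact π.out_sum _
    · exact π''.out_sum _
    · exact π.out_sum _
  step := fun st i a => st.elim
      (if i = s₁ ∧ a = a₁ then some (Sum.inl π''.init)
        else some (Sum.inr (π.step π.init i a)))
      (Sum.elim (fun s => some (Sum.inl (π''.step s i a)))
        (fun s => some (Sum.inr (π.step s i a))))

lemma value_prependA_evolve (π : Policy S A) (a₀ : A) (i : S) (a : A) (ε' : Env S A) :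
    value ((prependA π a₀).evolve i a) ε' = value (π.evolve i a) ε' :=
  value_hom (f := fun s => some s) rfl (fun _ _ => rfl) (fun _ _ _ => rfl) ε'

lemma value_spliceCons_evolve_hit (π π'' : Policy S A) (s₁ : S) (a₁ : A) (ε' : Env S A) :
    value ((spliceCons π π'' s₁ a₁).evolve s₁ a₁) ε' = value π'' ε' := by
  classical
  refine value_hom (f := fun s => some (Sum.inl s)) ?_ (fun _ _ => rfl) (fun _ _ _ => rfl) ε'
  show (if s₁ = s₁ ∧ a₁ = a₁ then some (Sum.inl π''.init)
        else some (Sum.inr (π.step π.init s₁ a₁))) = some (Sum.inl π''.init)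
  rw [if_pos ⟨rfl, rfl⟩]

lemma value_spliceCons_evolve_miss (π π'' : Policy S A) (s₁ : S) (a₁ : A) (s : S) (a : A)
    (hc : ¬(s = s₁ ∧ a = a₁)) (ε' : Env S A) :
    value ((spliceCons π π'' s₁ a₁).evolve s a) ε' = value (π.evolve s a) ε' := by
  classical
  refine value_hom (f := fun s => some (Sum.inr s)) ?_ (fun _ _ => rfl) (fun _ _ _ => rfl) ε'
  show (if s = s₁ ∧ a = a₁ then some (Sum.inl π''.init)
        else some (Sum.inr (π.step π.init s a))) = some (Sum.inr (π.step π.init s a))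
  rw [if_neg hc]

lemma beh_spliceCons_cons (π π'' : Policy S A) (s₁ : S) (a₁ : A) (L : List S) (M : List A) :
    (spliceCons π π'' s₁ a₁).beh (s₁ :: L) (a₁ :: M) = π.out π.init a₁ * π''.beh L M := by
  classical
  rw [beh_cons]
  congr 1
  have h1 : ((spliceCons π π'' s₁ a₁).evolve s₁ a₁) =
      { spliceCons π π'' s₁ a₁ with init := some (Sum.inl π''.init) } := by
    show ({ spliceCons π π'' s₁ a₁ with
        init := (spliceCons π π'' s₁ a₁).step (spliceCons π π'' s₁ a₁).init s₁ a₁ }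
        : Policy S A) = _
    have h2 : (spliceCons π π'' s₁ a₁).step (spliceCons π π'' s₁ a₁).init s₁ a₁
        = some (Sum.inl π''.init) := by
      show (if s₁ = s₁ ∧ a₁ = a₁ then some (Sum.inl π''.init)
        else some (Sum.inr (π.step π.init s₁ a₁))) = some (Sum.inl π''.init)
      rw [if_pos ⟨rfl, rfl⟩]
    rw [h2]
  rw [h1]
  have h3 := beh_hom π'' (spliceCons π π'' s₁ a₁) (fun s => some (Sum.inl s))
    (fun _ _ => rfl) (fun _ _ _ => rfl) L M π''.init
  exact h3

end Aux3
set_option linter.unusedSectionVars false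
section Aux4
open Transducer

variable {S A : Type} [Fintype S] [Fintype A]

open Classical in
lemma splice : ∀ (P : List (A × S)) (π : Policy S A) (ε : Env S A) (a₀ : A),
    (∀ a, nodeQ π ε P a ≤ nodeQ π ε P a₀) →
    ∃ π' : Policy S A,
      value π ε ≤ value π' ε ∧
      ∀ (i : S) (o₁ : A),
        π'.beh (P.map Prod.snd ++ [i]) (P.map Prod.fst ++ [o₁]) =
          if o₁ = a₀ then π.beh (P.map Prod.snd) (P.map Prod.fst) else 0 := by
  intro P
  induction P with
  | nil =>
    intro π ε a₀ hQ
    refine ⟨prependA π a₀, ?_, ?_⟩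
    · -- value π ε ≤ value (prependA π a₀) ε
      have hv : value (prependA π a₀) ε = nodeQ π ε [] a₀ := by
        rw [value_succ, nodeQ_nil]
        have h1 : ∀ a : A, ∑ p : S × Bool,
            (prependA π a₀).out (prependA π a₀).init a * ε.out ε.init p *
              (if p.2 then 1 else
                value ((prependA π a₀).evolve p.1 a) (ε.evolve a p)) =
            (if a = a₀ then (1:ℝ≥0∞) else 0) * ∑ p : S × Bool, ε.out ε.init p *
              (if p.2 then 1 else value (π.evolve p.1 a) (ε.evolve a p)) := by
          intro a
          rw [Finset.mul_sum]
          refine Finset.sum_congr rfl fun p _ => ?_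
          rw [value_prependA_evolve, ← mul_assoc]
          rfl
        simp only [h1, ite_mul, one_mul, zero_mul]
        rw [Finset.sum_ite_eq' Finset.univ a₀]
        simp
      rw [hv, value_eq_sum_nodeQ]
      calc ∑ a : A, π.out π.init a * nodeQ π ε [] a
          ≤ ∑ a : A, π.out π.init a * nodeQ π ε [] a₀ :=
            Finset.sum_le_sum fun a _ => mul_le_mul_right (hQ a) _
        _ = nodeQ π ε [] a₀ := by rw [← Finset.sum_mul, π.out_sum, one_mul]
    · intro i o₁
      simp only [List.map_nil, List.nil_append]
      rw [beh_single]
      show (if o₁ = a₀ then (1:ℝ≥0∞) else 0) = _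
      rw [beh_nil]
  | cons q P ih =>
    obtain ⟨a₁, s₁⟩ := q
    intro π ε a₀ hQ
    have hQ' : ∀ a, nodeQ (π.evolve s₁ a₁) (ε.evolve a₁ (s₁, false)) P a ≤
        nodeQ (π.evolve s₁ a₁) (ε.evolve a₁ (s₁, false)) P a₀ := by
      intro a; rw [← nodeQ_cons, ← nodeQ_cons]; exact hQ a
    obtain ⟨π'', h1, h2⟩ := ih (π.evolve s₁ a₁) (ε.evolve a₁ (s₁, false)) a₀ hQ'
    refine ⟨spliceCons π π'' s₁ a₁, ?_, ?_⟩
    · rw [value_succ π ε, value_succ (spliceCons π π'' s₁ a₁) ε]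
      refine Finset.sum_le_sum fun a _ => Finset.sum_le_sum fun p _ => ?_
      have hout : (spliceCons π π'' s₁ a₁).out (spliceCons π π'' s₁ a₁).init a
          = π.out π.init a := rfl
      rw [hout]
      refine mul_le_mul_right ?_ _
      obtain ⟨s, g⟩ := p
      cases g
      · simp only [if_false]
        by_cases hc : s = s₁ ∧ a = a₁
        · obtain ⟨rfl, rfl⟩ := hc
          rw [value_spliceCons_evolve_hit]
          exact h1
        · rw [value_spliceCons_evolve_miss π π'' s₁ a₁ s a hc]
      · simp
    · intro i o₁
      simp only [List.map_cons, List.cons_append]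
      rw [beh_spliceCons_cons, h2 i o₁, beh_cons]
      by_cases ho : o₁ = a₀
      · rw [if_pos ho, if_pos ho]
      · rw [if_neg ho, if_neg ho, mul_zero]

end Aux4
set_option linter.unusedSectionVars false
section Aux5
open Transducer

variable {S A : Type} [Fintype S] [Fintype A]

lemma stepSeq_append {I O : Type} [Fintype O] (t : Transducer I O) :
    ∀ (l₁ l₂ : List (I × O)) (st : t.State),
      t.stepSeq st (l₁ ++ l₂) = t.stepSeq (t.stepSeq st l₁) l₂ := by
  intro l₁
  induction l₁ with
  | nil => intro l₂ st; rfl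
  | cons p rest ih => intro l₂ st; exact ih l₂ (t.step st p.1 p.2)

lemma beh_append {I O : Type} [Fintype O] :
    ∀ (l : List (I × O)) (t : Transducer I O) (i : I) (o : O),
      t.beh (l.map Prod.fst ++ [i]) (l.map Prod.snd ++ [o]) =
        t.beh (l.map Prod.fst) (l.map Prod.snd) * t.out (t.stepSeq t.init l) o := by
  intro l
  induction l with
  | nil =>
    intro t i o
    simp only [List.map_nil, List.nil_append]
    rw [beh_single, beh_nil, one_mul]
    rfl
  | cons q l ih =>
    intro t i o
    simp only [List.map_cons, List.cons_append]
    rw [beh_cons, beh_cons, ih (t.evolve q.1 q.2) i o, mul_assoc]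
    congr 2
    · exact congrArg (fun st => t.out st o) (stepSeq_set_init t _ l _)

lemma reachable_path {I O : Type} [Fintype O] (t : Transducer I O) {st : t.State}
    (h : t.Reachable st) :
    ∃ l : List (I × O), t.stepSeq t.init l = st ∧
      t.beh (l.map Prod.fst) (l.map Prod.snd) ≠ 0 := by
  induction h with
  | init => exact ⟨[], rfl, one_ne_zero⟩
  | @step st' i o hr ho ih =>
    obtain ⟨l, hl, hb⟩ := ih
    refine ⟨l ++ [(i, o)], ?_, ?_⟩
    · rw [stepSeq_append, hl]; rfl
    · simp only [List.map_append, List.map_cons, List.map_nil]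
      rw [beh_append l t i o]
      exact mul_ne_zero hb (by rw [hl]; exact ho)

lemma exists_two_support {I O : Type} [Fintype O] (t : Transducer I O) (st : t.State)
    (h : ∀ o, t.out st o ≠ 1) :
    ∃ o₁ o₂, o₁ ≠ o₂ ∧ t.out st o₁ ≠ 0 ∧ t.out st o₂ ≠ 0 := by
  have hsum := t.out_sum st
  have h1 : ∃ o₁, t.out st o₁ ≠ 0 := by
    by_contra hc
    push_neg at hc
    rw [Finset.sum_eq_zero (fun o _ => hc o)] at hsum
    exact zero_ne_one hsum
  obtain ⟨o₁, ho₁⟩ := h1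
  classical
  have h2 : ∃ o₂ ∈ Finset.univ.erase o₁, t.out st o₂ ≠ 0 := by
    by_contra hc
    push_neg at hc
    have hz : ∑ o ∈ Finset.univ.erase o₁, t.out st o = 0 := Finset.sum_eq_zero hc
    have hae := Finset.add_sum_erase Finset.univ (t.out st) (Finset.mem_univ o₁)
    rw [hz, add_zero, hsum] at hae
    exact h o₁ hae
  obtain ⟨o₂, hmem, ho₂⟩ := h2
  exact ⟨o₁, o₂, ((Finset.mem_erase.mp hmem).1).symm, ho₁, ho₂⟩

end Aux5
/-- **Specifiable policies are deterministic.** If a policy `π` is uniquely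
optimal for some teleo-environment `ε` (optimal, with every optimal policy
behaviourally equal to `π`), then `π` is deterministic. -/
theorem specifiable_implies_deterministic
    {S A : Type} [Fintype S] [Fintype A]
    (π : Policy S A) (ε : Env S A) (h : UniquelyOptimal π ε) :
    π.Deterministic := by
  classical
  obtain ⟨hopt, huniq⟩ := h
  intro st hreach
  by_contra hnd
  push_neg at hnd
  obtain ⟨o₁, o₂, hne, ho₁, ho₂⟩ := exists_two_support π st fun o => hnd o
  obtain ⟨l, hl, hbeh⟩ := reachable_path π hreach
  set P : List (A × S) := l.map (fun q => (q.2, q.1)) with hP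
  haveI : Nonempty A := nonempty_A π
  haveI : Nonempty S := nonempty_S ε
  obtain ⟨a₀, -, ha₀⟩ := Finset.exists_max_image Finset.univ (nodeQ π ε P) Finset.univ_nonempty
  obtain ⟨π', hval, hbeh'⟩ := splice P π ε a₀ fun a => ha₀ a (Finset.mem_univ a)
  have hopt' : Optimal π' ε := fun π'' => le_trans (hopt π'') hval
  have hBE := huniq π' hopt'
  obtain ⟨i⟩ := ‹Nonempty S›
  obtain ⟨o, ho0, hoa⟩ : ∃ o, π.out st o ≠ 0 ∧ o ≠ a₀ := by
    by_cases h1 : o₁ = a₀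
    · exact ⟨o₂, ho₂, fun hh => hne (h1.trans hh.symm)⟩
    · exact ⟨o₁, ho₁, h1⟩
  have hms : P.map Prod.snd = l.map Prod.fst := by
    rw [hP, List.map_map]; rfl
  have hmf : P.map Prod.fst = l.map Prod.snd := by
    rw [hP, List.map_map]; rfl
  have key := hBE (P.map Prod.snd ++ [i]) (P.map Prod.fst ++ [o])
  rw [hbeh' i o, if_neg hoa] at key
  rw [hms, hmf, beh_append l π i o, hl] at key
  exact mul_ne_zero hbeh ho0 key.symm
end

section
/- If a non-deterministic policy π is optimal for a teleo-environment ε, then there exist at least two distinct deterministic policies that are also optimal for ε. In particular, a non-deterministic policy is never uniquely optimal. -/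
open scoped ENNReal BigOperators

/-- A policy is non-deterministic if at some reachable state its output
distribution gives positive probability to two distinct actions. -/
def Nondeterministic {S A : Type} [Fintype A] (π : Policy S A) : Prop :=
  ∃ st, π.Reachable st ∧ ∃ a b : A, a ≠ b ∧ π.out st a ≠ 0 ∧ π.out st b ≠ 0

namespace NUO

open Transducer
open scoped Classical
set_option linter.unusedSectionVars false

variable {S A : Type} [Fintype S] [Fintype A]

lemma out_le_one {I O : Type} [Fintype O] (t : Transducer I O) (st : t.State) (o : O) :
    t.out st o ≤ 1 := by
  have h := t.out_sum st
  calc t.out st o ≤ ∑ o', t.out st o' :=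
        Finset.single_le_sum (fun _ _ => zero_le) (Finset.mem_univ o)
    _ = 1 := h

lemma succProb_le_one : ∀ (n : ℕ) (π : Policy S A) (ε : Env S A), succProb n π ε ≤ 1 := by
  intro n
  induction n with
  | zero => intro π ε; simp [succProb]
  | succ n ih =>
    intro π ε
    simp only [succProb]
    calc ∑ a : A, ∑ p : S × Bool,
          π.out π.init a * ε.out ε.init p *
            (if p.2 then 1 else succProb n (π.evolve p.1 a) (ε.evolve a p))
        ≤ ∑ a : A, ∑ p : S × Bool, π.out π.init a * ε.out ε.init p * 1 := by
          refine Finset.sum_le_sum fun a _ => Finset.sum_le_sum fun p _ => ?_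
          refine mul_le_mul_right ?_ _
          cases hp : p.2 <;> simp [ih]
      _ = ∑ a : A, π.out π.init a * ∑ p : S × Bool, ε.out ε.init p := by
          simp [Finset.mul_sum, mul_one]
      _ = 1 := by simp [ε.out_sum, π.out_sum]

lemma value_le_one (π : Policy S A) (ε : Env S A) : value π ε ≤ 1 :=
  iSup_le fun n => succProb_le_one n π ε

/-- simulation congruence for `succProb` -/
lemma succProb_congr : ∀ (n : ℕ) (π₁ π₂ : Policy S A) (φ : π₁.State → π₂.State),
    φ π₁.init = π₂.init →
    (∀ st a, π₂.out (φ st) a = π₁.out st a) →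
    (∀ st i o, φ (π₁.step st i o) = π₂.step (φ st) i o) →
    ∀ (ε : Env S A), succProb n π₁ ε = succProb n π₂ ε := by
  intro n
  induction n with
  | zero => intro _ _ _ _ _ _ _; simp [succProb]
  | succ n ih =>
    intro π₁ π₂ φ hi ho hs ε
    simp only [succProb]
    refine Finset.sum_congr rfl fun a _ => Finset.sum_congr rfl fun p _ => ?_
    have h1 : π₂.out π₂.init a = π₁.out π₁.init a := by rw [← hi, ho]
    rw [h1]
    congr 1
    cases hp : p.2
    · have h2 := ih (π₁.evolve p.1 a) (π₂.evolve p.1 a) φ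
        (by simpa [Transducer.evolve, hi] using hs π₁.init p.1 a) ho hs (ε.evolve a p)
      simp [h2]
    · simp

/-- simulation congruence for `beh` -/
lemma beh_congr {I O : Type} [Fintype O] :
    ∀ (is : List I) (os : List O) (t₁ t₂ : Transducer I O) (φ : t₁.State → t₂.State),
    φ t₁.init = t₂.init →
    (∀ st o, t₂.out (φ st) o = t₁.out st o) →
    (∀ st i o, φ (t₁.step st i o) = t₂.step (φ st) i o) →
    t₁.beh is os = t₂.beh is os := by
  intro is
  induction is with
  | nil => intro os t₁ t₂ φ hi ho hs; cases os <;> simp [Transducer.beh]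
  | cons i is ih =>
    intro os t₁ t₂ φ hi ho hs
    cases os with
    | nil => simp [Transducer.beh]
    | cons o os =>
      simp only [Transducer.beh]
      have h1 : t₂.out t₂.init o = t₁.out t₁.init o := by rw [← hi, ho]
      rw [h1]
      congr 1
      exact ih os (t₁.evolve i o) (t₂.evolve i o) φ
        (by simpa [Transducer.evolve, hi] using hs t₁.init i o) ho hs

/-- The deterministic policy given by a choice function on histories. -/
noncomputable def polF (f : List (S × A) → A) : Policy S A where
  State := List (S × A)
  init := []
  out h a := if a = f h then 1 else 0
  out_sum st := by simp
  step h s a := h ++ [(s, a)]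

lemma polF_det (f : List (S × A) → A) : (polF f).Deterministic :=
  fun st _ => ⟨f st, if_pos rfl⟩

def subAt (q : S × A) (f : List (S × A) → A) : List (S × A) → A :=
  fun h => f (q :: h)

lemma polF_evolve_succProb (f : List (S × A) → A) (s : S) (c : A) (n : ℕ) (ε : Env S A) :
    succProb n ((polF f).evolve s c) ε = succProb n (polF (subAt (s, c) f)) ε := by
  refine (succProb_congr n (polF (subAt (s, c) f)) ((polF f).evolve s c)
    (fun h => (s, c) :: h) rfl (fun st a => rfl) (fun st i o => rfl) ε).symm

lemma polF_evolve_beh (f : List (S × A) → A) (s : S) (c : A) (is : List S) (os : List A) :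
    ((polF f).evolve s c).beh is os = (polF (subAt (s, c) f)).beh is os := by
  refine (beh_congr is os (polF (subAt (s, c) f)) ((polF f).evolve s c)
    (fun h => (s, c) :: h) rfl (fun st a => rfl) (fun st i o => rfl)).symm

end NUO
namespace NUO
set_option maxHeartbeats 1000000

open scoped Classical
variable {S A : Type} [Fintype S] [Fintype A]

/-- depth-`n` deterministic decision trees -/
def Tr (S A : Type) : ℕ → Type
  | 0 => PUnit
  | n + 1 => A × ((S × A) → Tr S A n)

noncomputable instance trFintype (S A : Type) [Fintype S] [Fintype A] :
    ∀ n, Fintype (Tr S A n)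
  | 0 => inferInstanceAs (Fintype PUnit)
  | n + 1 => by
      haveI := trFintype S A n
      exact inferInstanceAs (Fintype (A × ((S × A) → Tr S A n)))

/-- the choice function on histories encoded by a tree (default `a₀` beyond depth) -/
def toFun (a₀ : A) : ∀ n, Tr S A n → (List (S × A) → A)
  | 0, _ => fun _ => a₀
  | n + 1, t => fun h =>
      match h with
      | [] => t.1
      | q :: h' => toFun a₀ n (t.2 q) h'

/-- product weight of a tree under the node marginals of policy `π` -/
noncomputable def Wt : ∀ n, Policy S A → Tr S A n → ℝ≥0∞
  | 0, _, _ => 1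
  | n + 1, π, t => π.out π.init t.1 * ∏ q : S × A, Wt n (π.evolve q.1 q.2) (t.2 q)

/-- expectation of a functional of the choice function under the randomness of `π` -/
noncomputable def EE (a₀ : A) (n : ℕ) (π : Policy S A) (Φ : (List (S × A) → A) → ℝ≥0∞) :
    ℝ≥0∞ :=
  ∑ t : Tr S A n, Wt n π t * Φ (toFun a₀ n t)

lemma sum_tr_succ (n : ℕ) (g : Tr S A (n + 1) → ℝ≥0∞) :
    ∑ t : Tr S A (n + 1), g t = ∑ c : A, ∑ F : (S × A) → Tr S A n, g (c, F) := by
  refine Eq.trans ?_ (Fintype.sum_prod_type (f := fun p : A × ((S × A) → Tr S A n) => g p))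
  exact Finset.sum_nbij' (fun t => t) (fun t => t)
    (fun _ _ => Finset.mem_univ _) (fun _ _ => Finset.mem_univ _)
    (fun _ _ => rfl) (fun _ _ => rfl) (fun _ _ => rfl)

lemma sum_pi_mul (n : ℕ) (W : (S × A) → Tr S A n → ℝ≥0∞)
    (hW : ∀ q, ∑ u : Tr S A n, W q u = 1) (q₀ : S × A) (h : Tr S A n → ℝ≥0∞) :
    ∑ F : (S × A) → Tr S A n, (∏ q : S × A, W q (F q)) * h (F q₀)
      = ∑ u : Tr S A n, W q₀ u * h u := by
  classical
  have step1 : ∀ F : (S × A) → Tr S A n,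
      (∏ q : S × A, W q (F q)) * h (F q₀)
        = ∏ q : S × A, (W q (F q) * if q = q₀ then h (F q) else 1) := by
    intro F
    rw [Finset.prod_mul_distrib]
    congr 1
    rw [Finset.prod_ite_eq' Finset.univ q₀ (fun q => h (F q))]
    simp
  calc ∑ F : (S × A) → Tr S A n, (∏ q : S × A, W q (F q)) * h (F q₀)
      = ∑ F : (S × A) → Tr S A n, ∏ q : S × A, (W q (F q) * if q = q₀ then h (F q) else 1) :=
        Finset.sum_congr rfl fun F _ => step1 F
    _ = ∑ F ∈ Fintype.piFinset (fun _ : S × A => (Finset.univ : Finset (Tr S A n))),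
          ∏ q : S × A, (W q (F q) * if q = q₀ then h (F q) else 1) := by
        rw [Fintype.piFinset_univ]
    _ = ∏ q : S × A, ∑ u : Tr S A n, (W q u * if q = q₀ then h u else 1) :=
        Finset.sum_prod_piFinset (Finset.univ : Finset (Tr S A n))
          (fun (q : S × A) (u : Tr S A n) => W q u * if q = q₀ then h u else 1)
    _ = ∑ u : Tr S A n, W q₀ u * h u := by
        rw [Finset.prod_eq_single q₀]
        · simp
        · intro q _ hq
          simp [hq, hW q]
        · simp

lemma Wt_sum : ∀ (n : ℕ) (π : Policy S A), ∑ t : Tr S A n, Wt n π t = 1 := by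
  intro n
  induction n with
  | zero =>
    intro π
    rw [show (∑ t : Tr S A 0, Wt 0 π t) = ∑ _t : PUnit, (1 : ℝ≥0∞) from rfl]
    simp
  | succ n ih =>
    intro π
    rw [sum_tr_succ n (Wt (n + 1) π)]
    have hF : ∑ F : (S × A) → Tr S A n, ∏ q : S × A, Wt n (π.evolve q.1 q.2) (F q)
        = 1 := by
      calc ∑ F : (S × A) → Tr S A n, ∏ q : S × A, Wt n (π.evolve q.1 q.2) (F q)
          = ∑ F ∈ Fintype.piFinset (fun _ : S × A => (Finset.univ : Finset (Tr S A n))),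
              ∏ q : S × A, Wt n (π.evolve q.1 q.2) (F q) := by rw [Fintype.piFinset_univ]
        _ = ∏ q : S × A, ∑ u : Tr S A n, Wt n (π.evolve q.1 q.2) u :=
            Finset.sum_prod_piFinset (Finset.univ : Finset (Tr S A n))
              (fun (q : S × A) (u : Tr S A n) => Wt n (π.evolve q.1 q.2) u)
        _ = 1 := by simp [ih]
    calc ∑ c : A, ∑ F : (S × A) → Tr S A n, Wt (n + 1) π (c, F)
        = ∑ c : A, π.out π.init c *
            ∑ F : (S × A) → Tr S A n, ∏ q : S × A, Wt n (π.evolve q.1 q.2) (F q) := by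
          refine Finset.sum_congr rfl fun c _ => ?_
          rw [Finset.mul_sum]
          rfl
      _ = 1 := by rw [hF]; simp [π.out_sum]

end NUO
namespace NUO

open scoped Classical
variable {S A : Type} [Fintype S] [Fintype A]

lemma succProb_polF_succ (f : List (S × A) → A) (n : ℕ) (ε : Env S A) :
    succProb (n + 1) (polF f) ε
      = ∑ p : S × Bool, ε.out ε.init p *
          (if p.2 then 1
           else succProb n (polF (subAt (p.1, f []) f)) (ε.evolve (f []) p)) := by
  simp only [succProb]
  have h1 : ∀ a : A, (polF f).out (polF f).init a = if a = f [] then 1 else 0 := fun _ => rfl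
  calc ∑ a : A, ∑ p : S × Bool,
        (polF f).out (polF f).init a * ε.out ε.init p *
          (if p.2 then 1 else succProb n ((polF f).evolve p.1 a) (ε.evolve a p))
      = ∑ a : A, (if a = f [] then
          (∑ p : S × Bool, ε.out ε.init p *
            (if p.2 then 1 else succProb n ((polF f).evolve p.1 a) (ε.evolve a p))) else 0) := by
        refine Finset.sum_congr rfl fun a _ => ?_
        by_cases ha : a = f []
        · rw [if_pos ha, Finset.sum_congr rfl (fun p _ => ?_)]
          rw [h1 a, if_pos ha, one_mul]
        · rw [if_neg ha]
          refine Finset.sum_eq_zero fun p _ => ?_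
          rw [h1 a, if_neg ha, zero_mul, zero_mul]
    _ = ∑ p : S × Bool, ε.out ε.init p *
          (if p.2 then 1 else succProb n ((polF f).evolve p.1 (f [])) (ε.evolve (f []) p)) := by
        rw [Finset.sum_ite_eq' Finset.univ (f [])]
        simp
    _ = _ := by
        refine Finset.sum_congr rfl fun p _ => ?_
        rw [polF_evolve_succProb]

lemma EE_succProb (a₀ : A) :
    ∀ (n N : ℕ), n ≤ N → ∀ (π : Policy S A) (ε : Env S A),
      EE a₀ N π (fun f => succProb n (polF f) ε) = succProb n π ε := by
  intro n
  induction n with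
  | zero =>
    intro N _ π ε
    simp [EE, succProb, Wt_sum]
  | succ n ih =>
    intro N hn π ε
    cases N with
    | zero => omega
    | succ N' =>
      have hn' : n ≤ N' := Nat.lt_succ_iff.mp hn
      rw [EE, sum_tr_succ]
      have key : ∀ c : A, ∑ F : (S × A) → Tr S A N',
          Wt (N' + 1) π (c, F) * succProb (n + 1) (polF (toFun a₀ (N' + 1) (c, F))) ε
          = π.out π.init c * ∑ p : S × Bool, ε.out ε.init p *
              (if p.2 then 1 else succProb n (π.evolve p.1 c) (ε.evolve c p)) := by
        intro c
        have hf0 : ∀ F : (S × A) → Tr S A N', (toFun a₀ (N' + 1) (c, F)) [] = c := fun _ => rfl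
        have hsub : ∀ (F : (S × A) → Tr S A N') (q : S × A),
            subAt q (toFun a₀ (N' + 1) (c, F)) = toFun a₀ N' (F q) := fun _ _ => rfl
        calc ∑ F : (S × A) → Tr S A N',
              Wt (N' + 1) π (c, F) * succProb (n + 1) (polF (toFun a₀ (N' + 1) (c, F))) ε
            = ∑ F : (S × A) → Tr S A N', ∑ p : S × Bool,
                π.out π.init c *
                  ((∏ q : S × A, Wt N' (π.evolve q.1 q.2) (F q)) *
                    (ε.out ε.init p *
                      (if p.2 then 1
                       else succProb n (polF (toFun a₀ N' (F (p.1, c)))) (ε.evolve c p)))) := by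
              refine Finset.sum_congr rfl fun F _ => ?_
              rw [succProb_polF_succ, hf0]
              have : ∀ p : S × Bool,
                  subAt (p.1, c) (toFun a₀ (N' + 1) (c, F)) = toFun a₀ N' (F (p.1, c)) :=
                fun p => hsub F (p.1, c)
              simp only [this]
              rw [show Wt (N' + 1) π (c, F)
                  = π.out π.init c * ∏ q : S × A, Wt N' (π.evolve q.1 q.2) (F q) from rfl]
              rw [mul_assoc, Finset.mul_sum, Finset.mul_sum]
          _ = π.out π.init c * ∑ p : S × Bool, ∑ F : (S × A) → Tr S A N',
                (∏ q : S × A, Wt N' (π.evolve q.1 q.2) (F q)) *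
                  (ε.out ε.init p *
                    (if p.2 then 1
                     else succProb n (polF (toFun a₀ N' (F (p.1, c)))) (ε.evolve c p))) := by
              rw [Finset.sum_comm, Finset.mul_sum]
              refine Finset.sum_congr rfl fun p _ => ?_
              rw [Finset.mul_sum]
          _ = π.out π.init c * ∑ p : S × Bool, ε.out ε.init p *
                (if p.2 then 1 else succProb n (π.evolve p.1 c) (ε.evolve c p)) := by
              congr 1
              refine Finset.sum_congr rfl fun p _ => ?_
              have hrw : ∀ F : (S × A) → Tr S A N',
                  (∏ q : S × A, Wt N' (π.evolve q.1 q.2) (F q)) *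
                    (ε.out ε.init p *
                      (if p.2 then 1
                       else succProb n (polF (toFun a₀ N' (F (p.1, c)))) (ε.evolve c p)))
                  = ε.out ε.init p *
                      ((∏ q : S × A, Wt N' (π.evolve q.1 q.2) (F q)) *
                        (if p.2 then 1
                         else succProb n (polF (toFun a₀ N' (F (p.1, c)))) (ε.evolve c p))) := by
                intro F; ring
              rw [Finset.sum_congr rfl fun F _ => hrw F, ← Finset.mul_sum]
              congr 1
              rw [sum_pi_mul N' (fun q u => Wt N' (π.evolve q.1 q.2) u)
                (fun q => Wt_sum N' (π.evolve q.1 q.2)) (p.1, c)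
                (fun u => if p.2 then 1
                  else succProb n (polF (toFun a₀ N' u)) (ε.evolve c p))]
              cases hp : p.2
              · simp only [Bool.false_eq_true, if_false]
                exact ih N' hn' (π.evolve p.1 c) (ε.evolve c p)
              · simp [Wt_sum N' (π.evolve p.1 c)]
      rw [Finset.sum_congr rfl fun c _ => key c]
      simp only [succProb]
      refine Finset.sum_congr rfl fun c _ => ?_
      rw [Finset.mul_sum]
      refine Finset.sum_congr rfl fun p _ => ?_
      ring

end NUO
namespace NUO

open scoped Classical
set_option linter.unusedSectionVars false
set_option maxHeartbeats 1000000
variable {S A : Type} [Fintype S] [Fintype A]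

lemma Wt_fiber (n : ℕ) (π : Policy S A) (c : A) :
    ∑ F : (S × A) → Tr S A n, Wt (n + 1) π (c, F) = π.out π.init c := by
  have hF : ∑ F : (S × A) → Tr S A n, ∏ q : S × A, Wt n (π.evolve q.1 q.2) (F q) = 1 := by
    calc ∑ F : (S × A) → Tr S A n, ∏ q : S × A, Wt n (π.evolve q.1 q.2) (F q)
        = ∑ F ∈ Fintype.piFinset (fun _ : S × A => (Finset.univ : Finset (Tr S A n))),
            ∏ q : S × A, Wt n (π.evolve q.1 q.2) (F q) := by rw [Fintype.piFinset_univ]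
      _ = ∏ q : S × A, ∑ u : Tr S A n, Wt n (π.evolve q.1 q.2) u :=
          Finset.sum_prod_piFinset (Finset.univ : Finset (Tr S A n))
            (fun (q : S × A) (u : Tr S A n) => Wt n (π.evolve q.1 q.2) u)
      _ = 1 := by simp [Wt_sum]
  calc ∑ F : (S × A) → Tr S A n, Wt (n + 1) π (c, F)
      = π.out π.init c *
          ∑ F : (S × A) → Tr S A n, ∏ q : S × A, Wt n (π.evolve q.1 q.2) (F q) := by
        rw [Finset.mul_sum]; rfl
    _ = π.out π.init c := by rw [hF, mul_one]

/-- the constraint that `f` follows the action record of history `l` -/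
def Pchain (l : List (S × A)) (f : List (S × A) → A) : Prop :=
  ∀ (j : ℕ) (p : S × A), l[j]? = some p → f (l.take j) = p.2

lemma Pchain_nil (f : List (S × A) → A) : Pchain [] f := by
  intro j p hp
  simp at hp

lemma Pchain_cons (q : S × A) (l : List (S × A)) (x : A) (f : List (S × A) → A) :
    (Pchain (q :: l) f ∧ f (q :: l) = x)
      ↔ (f [] = q.2 ∧ (Pchain l (subAt q f) ∧ (subAt q f) l = x)) := by
  constructor
  · rintro ⟨hP, hx⟩
    refine ⟨hP 0 q (by simp), ?_, hx⟩
    intro j p hp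
    exact hP (j + 1) p (by simpa using hp)
  · rintro ⟨h0, hP, hx⟩
    refine ⟨?_, hx⟩
    intro j p hp
    cases j with
    | zero =>
      simp only [List.getElem?_cons_zero, Option.some.injEq] at hp
      rw [List.take_zero, h0, ← hp]
    | succ j =>
      rw [List.take_succ_cons]
      exact hP j p (by simpa using hp)

/-- probability that `π` itself follows the action record of `l` -/
noncomputable def prodW : Policy S A → List (S × A) → ℝ≥0∞
  | _, [] => 1
  | π, q :: l => π.out π.init q.2 * prodW (π.evolve q.1 q.2) l

lemma stepSeq_evolve (π : Policy S A) (i : S) (o : A) :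
    ∀ (l : List (S × A)) (st : π.State), (π.evolve i o).stepSeq st l = π.stepSeq st l := by
  intro l
  induction l with
  | nil => intro st; rfl
  | cons p r ih => intro st; exact ih (π.step st p.1 p.2)

lemma stepSeq_append (π : Policy S A) :
    ∀ (l l' : List (S × A)) (st : π.State),
      π.stepSeq st (l ++ l') = π.stepSeq (π.stepSeq st l) l' := by
  intro l
  induction l with
  | nil => intro l' st; rfl
  | cons p r ih => intro l' st; exact ih l' (π.step st p.1 p.2)

lemma prodW_append_singleton :
    ∀ (l : List (S × A)) (π : Policy S A) (q : S × A),
      prodW π (l ++ [q]) = prodW π l * π.out (π.stepSeq π.init l) q.2 := by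
  intro l
  induction l with
  | nil =>
    intro π q
    simp [prodW, Transducer.stepSeq]
  | cons r l ih =>
    intro π q
    show π.out π.init r.2 * prodW (π.evolve r.1 r.2) (l ++ [q]) = _
    rw [ih (π.evolve r.1 r.2) q]
    show _ = π.out π.init r.2 * prodW (π.evolve r.1 r.2) l *
        π.out (π.stepSeq (π.step π.init r.1 r.2) l) q.2
    rw [mul_assoc]
    rw [show (π.evolve r.1 r.2).stepSeq (π.evolve r.1 r.2).init l
        = π.stepSeq (π.step π.init r.1 r.2) l from stepSeq_evolve π r.1 r.2 l _]
    rfl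

lemma reach_path (π : Policy S A) {st : π.State} (h : π.Reachable st) :
    ∃ l : List (S × A), π.stepSeq π.init l = st ∧ prodW π l ≠ 0 := by
  induction h with
  | init => exact ⟨[], rfl, one_ne_zero⟩
  | step i o hre hout ih =>
    obtain ⟨l, hl, hw⟩ := ih
    refine ⟨l ++ [(i, o)], ?_, ?_⟩
    · rw [stepSeq_append, hl]; rfl
    · rw [prodW_append_singleton, hl]
      exact mul_ne_zero hw hout

lemma prodW_le_one : ∀ (l : List (S × A)) (π : Policy S A), prodW π l ≤ 1 := by
  intro l
  induction l with
  | nil => intro π; simp [prodW]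
  | cons q l ih =>
    intro π
    exact mul_le_one' (out_le_one π π.init q.2) (ih (π.evolve q.1 q.2))

lemma EE_chain (a₀ : A) :
    ∀ (l : List (S × A)) (x : A) (N : ℕ), l.length < N → ∀ (π : Policy S A),
      prodW π l * π.out (π.stepSeq π.init l) x
        ≤ EE a₀ N π (fun f => if Pchain l f ∧ f l = x then 1 else 0) := by
  intro l
  induction l with
  | nil =>
    intro x N hN π
    cases N with
    | zero => omega
    | succ N' =>
      rw [EE, sum_tr_succ]
      have hterm : ∀ (c : A) (F : (S × A) → Tr S A N'),
          Wt (N' + 1) π (c, F) *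
            (if Pchain [] (toFun a₀ (N' + 1) (c, F)) ∧ (toFun a₀ (N' + 1) (c, F)) [] = x
             then 1 else 0)
          = if c = x then Wt (N' + 1) π (c, F) else 0 := by
        intro c F
        have hf0 : (toFun a₀ (N' + 1) (c, F)) [] = c := rfl
        by_cases hc : c = x
        · rw [if_pos hc, if_pos ⟨Pchain_nil _, by rw [hf0, hc]⟩, mul_one]
        · rw [if_neg hc, if_neg (by rintro ⟨-, hx⟩; exact hc (hf0 ▸ hx)), mul_zero]
      calc prodW π [] * π.out (π.stepSeq π.init []) x
          = π.out π.init x := by simp [prodW, Transducer.stepSeq]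
        _ = ∑ c : A, if c = x then π.out π.init c else 0 := by
            rw [Finset.sum_ite_eq' Finset.univ x (fun c => π.out π.init c)]
            simp
        _ = ∑ c : A, ∑ F : (S × A) → Tr S A N',
              Wt (N' + 1) π (c, F) *
                (if Pchain [] (toFun a₀ (N' + 1) (c, F)) ∧ (toFun a₀ (N' + 1) (c, F)) [] = x
                 then 1 else 0) := by
            refine Finset.sum_congr rfl fun c _ => ?_
            rw [Finset.sum_congr rfl fun F _ => hterm c F]
            by_cases hc : c = x
            · simp only [if_pos hc, Wt_fiber]
            · simp only [if_neg hc, Finset.sum_const_zero]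
        _ ≤ _ := le_refl _
  | cons q l ihl =>
    intro x N hN π
    cases N with
    | zero => omega
    | succ N' =>
      have hN' : l.length < N' := by
        simpa [Nat.succ_lt_succ_iff] using hN
      rw [EE, sum_tr_succ]
      have hterm : ∀ (c : A) (F : (S × A) → Tr S A N'),
          Wt (N' + 1) π (c, F) *
            (if Pchain (q :: l) (toFun a₀ (N' + 1) (c, F)) ∧
                  (toFun a₀ (N' + 1) (c, F)) (q :: l) = x then 1 else 0)
          = (if c = q.2 then Wt (N' + 1) π (c, F) else 0) *
              (if Pchain l (toFun a₀ N' (F q)) ∧ (toFun a₀ N' (F q)) l = x then 1 else 0) := by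
        intro c F
        have hf0 : (toFun a₀ (N' + 1) (c, F)) [] = c := rfl
        have hsub : subAt q (toFun a₀ (N' + 1) (c, F)) = toFun a₀ N' (F q) := rfl
        rw [show (if Pchain (q :: l) (toFun a₀ (N' + 1) (c, F)) ∧
              (toFun a₀ (N' + 1) (c, F)) (q :: l) = x then (1:ℝ≥0∞) else 0)
            = if ((toFun a₀ (N' + 1) (c, F)) [] = q.2 ∧
                (Pchain l (toFun a₀ N' (F q)) ∧ (toFun a₀ N' (F q)) l = x)) then 1 else 0 by
              rw [← hsub]
              exact if_congr (Pchain_cons q l x _) rfl rfl]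
        rw [hf0]
        by_cases hc : c = q.2 <;>
          by_cases hP : Pchain l (toFun a₀ N' (F q)) ∧ (toFun a₀ N' (F q)) l = x <;>
          simp [hc, hP]
      rw [Finset.sum_congr rfl fun c _ => Finset.sum_congr rfl fun F _ => hterm c F]
      have hcollapse : ∀ c : A, (∑ F : (S × A) → Tr S A N',
          (if c = q.2 then Wt (N' + 1) π (c, F) else 0) *
            (if Pchain l (toFun a₀ N' (F q)) ∧ (toFun a₀ N' (F q)) l = x then 1 else 0))
          = if c = q.2 then
              π.out π.init c * EE a₀ N' (π.evolve q.1 q.2)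
                (fun f => if Pchain l f ∧ f l = x then 1 else 0)
            else 0 := by
        intro c
        by_cases hc : c = q.2
        · rw [if_pos hc]
          have : ∀ F : (S × A) → Tr S A N',
              (if c = q.2 then Wt (N' + 1) π (c, F) else 0) *
                (if Pchain l (toFun a₀ N' (F q)) ∧ (toFun a₀ N' (F q)) l = x then 1 else 0)
              = π.out π.init c *
                  ((∏ q' : S × A, Wt N' (π.evolve q'.1 q'.2) (F q')) *
                    (if Pchain l (toFun a₀ N' (F q)) ∧ (toFun a₀ N' (F q)) l = x
                     then 1 else 0)) := by
            intro F
            rw [if_pos hc]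
            rw [show Wt (N' + 1) π (c, F)
                = π.out π.init c * ∏ q' : S × A, Wt N' (π.evolve q'.1 q'.2) (F q') from rfl]
            rw [mul_assoc]
          rw [Finset.sum_congr rfl fun F _ => this F, ← Finset.mul_sum]
          congr 1
          have := sum_pi_mul N' (fun q' u => Wt N' (π.evolve q'.1 q'.2) u)
            (fun q' => Wt_sum N' (π.evolve q'.1 q'.2)) q
            (fun u => if Pchain l (toFun a₀ N' u) ∧ (toFun a₀ N' u) l = x then 1 else 0)
          rw [this]
          rfl
        · rw [if_neg hc]
          refine Finset.sum_eq_zero fun F _ => ?_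
          rw [if_neg hc, zero_mul]
      rw [Finset.sum_congr rfl fun c _ => hcollapse c]
      rw [Finset.sum_ite_eq' Finset.univ q.2]
      simp only [Finset.mem_univ, if_pos]
      show prodW π (q :: l) * π.out (π.stepSeq π.init (q :: l)) x ≤ _
      rw [show prodW π (q :: l) = π.out π.init q.2 * prodW (π.evolve q.1 q.2) l from rfl]
      rw [show π.stepSeq π.init (q :: l) = π.stepSeq (π.step π.init q.1 q.2) l from rfl]
      rw [mul_assoc]
      refine mul_le_mul_right ?_ _
      have hstep : π.stepSeq (π.step π.init q.1 q.2) l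
          = (π.evolve q.1 q.2).stepSeq (π.evolve q.1 q.2).init l := by
        exact (stepSeq_evolve π q.1 q.2 l _).symm
      rw [hstep]
      exact ihl x N' hN' (π.evolve q.1 q.2)

end NUO
namespace NUO

open scoped Classical
set_option linter.unusedSectionVars false
set_option maxHeartbeats 1000000
variable {S A : Type} [Fintype S] [Fintype A]

lemma succProb_polF_local : ∀ (n : ℕ) (f f' : List (S × A) → A),
    (∀ h : List (S × A), h.length < n → f h = f' h) →
    ∀ ε : Env S A, succProb n (polF f) ε = succProb n (polF f') ε := by
  intro n
  induction n with
  | zero => intro f f' _ ε; rfl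
  | succ n ih =>
    intro f f' hag ε
    have h0 : f [] = f' [] := hag [] (by simp)
    rw [succProb_polF_succ, succProb_polF_succ, h0]
    refine Finset.sum_congr rfl fun p _ => ?_
    congr 1
    cases hp : p.2
    · simp only [Bool.false_eq_true, if_false]
      exact ih (subAt (p.1, f' []) f) (subAt (p.1, f' []) f')
        (fun h hh => hag _ (by simpa using hh)) (ε.evolve (f' []) p)
    · simp

lemma exists_good (π : Policy S A) (ε : Env S A) (hopt : Optimal π ε)
    (hV0 : value π ε ≠ 0) (l : List (S × A)) (x : A)
    (hw0 : prodW π l * π.out (π.stepSeq π.init l) x ≠ 0) :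
    ∃ f : List (S × A) → A, Pchain l f ∧ f l = x ∧ value π ε ≤ value (polF f) ε := by
  classical
  set a₀ := x with ha₀
  set V := value π ε with hV
  have hV1 : V ≤ 1 := value_le_one π ε
  have hVtop : V ≠ ⊤ := fun h => by rw [h] at hV1; exact (lt_irrefl _ (lt_of_le_of_lt hV1 ENNReal.one_lt_top))
  have hsp : ∀ (f : List (S × A) → A) (n : ℕ), succProb n (polF f) ε ≤ V := fun f n =>
    le_trans (le_iSup (fun n => succProb n (polF f) ε) n) (hopt (polF f))
  set w0 := prodW π l * π.out (π.stepSeq π.init l) x with hw0def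
  have hw1 : w0 ≤ 1 := mul_le_one' (prodW_le_one l π) (out_le_one π _ x)
  have hwtop : w0 ≠ ⊤ := fun h => by rw [h] at hw1; exact (lt_irrefl _ (lt_of_le_of_lt hw1 ENNReal.one_lt_top))
  have h2ne : (2 : ℝ≥0∞)⁻¹ ≠ 0 := ENNReal.inv_ne_zero.mpr ENNReal.ofNat_ne_top
  have h2top : (2 : ℝ≥0∞)⁻¹ ≠ ⊤ := ENNReal.inv_ne_top.mpr (by norm_num)
  set t : ℕ → ℝ≥0∞ := fun k => 2⁻¹ ^ k with htdef
  have ht0 : ∀ k, t k ≠ 0 := fun k => pow_ne_zero k h2ne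
  have httop : ∀ k, t k ≠ ⊤ := fun k => ENNReal.pow_ne_top h2top
  set β : ℕ → ℝ≥0∞ := fun k => w0 * 2⁻¹ ^ (k + 2) with hβdef
  have hβ0 : ∀ k, β k ≠ 0 := fun k => mul_ne_zero hw0 (pow_ne_zero _ h2ne)
  set δ : ℕ → ℝ≥0∞ := fun k => t k * β k with hδdef
  have hδ0 : ∀ k, δ k ≠ 0 := fun k => mul_ne_zero (ht0 k) (hβ0 k)
  -- horizons achieving the value within δ k
  have hex : ∀ k, ∃ n, V - δ k < succProb n π ε := by
    intro k
    have h1 : V - δ k < V := ENNReal.sub_lt_self hVtop hV0 (hδ0 k)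
    have h2 : V - δ k < ⨆ n, succProb n π ε := h1
    exact lt_iSup_iff.mp h2
  choose nn hnn using hex
  -- Markov bound on the bad events
  have hB : ∀ (k N : ℕ), nn k ≤ N →
      EE a₀ N π (fun f => if succProb (nn k) (polF f) ε < V - t k then 1 else 0) ≤ β k := by
    intro k N hkN
    set Φ : (List (S × A) → A) → ℝ≥0∞ := fun f => succProb (nn k) (polF f) ε with hΦdef
    set B : (List (S × A) → A) → ℝ≥0∞ :=
      fun f => if succProb (nn k) (polF f) ε < V - t k then 1 else 0 with hBdef
    have hpoint : ∀ f, Φ f + t k * B f ≤ V := by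
      intro f
      by_cases hb : succProb (nn k) (polF f) ε < V - t k
      · rw [hBdef]
        simp only [if_pos hb, mul_one]
        by_cases htV : t k ≤ V
        · calc Φ f + t k ≤ (V - t k) + t k := add_le_add_left hb.le _
            _ = V := tsub_add_cancel_of_le htV
        · exfalso
          have : V - t k = 0 := tsub_eq_zero_of_le (le_of_not_ge htV)
          rw [this] at hb
          exact (not_lt_of_ge zero_le) hb
      · rw [hBdef]; simp only [if_neg hb, mul_zero, add_zero]; exact hsp f (nn k)
    have hEE : EE a₀ N π Φ + t k * EE a₀ N π B ≤ V := by
      have heq : EE a₀ N π Φ + t k * EE a₀ N π B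
          = ∑ u : Tr S A N, Wt N π u * (Φ (toFun a₀ N u) + t k * B (toFun a₀ N u)) := by
        rw [EE, EE, Finset.mul_sum, ← Finset.sum_add_distrib]
        refine Finset.sum_congr rfl fun u _ => ?_
        ring
      rw [heq]
      calc ∑ u : Tr S A N, Wt N π u * (Φ (toFun a₀ N u) + t k * B (toFun a₀ N u))
          ≤ ∑ u : Tr S A N, Wt N π u * V :=
            Finset.sum_le_sum fun u _ => mul_le_mul_right (hpoint _) _
        _ = (∑ u : Tr S A N, Wt N π u) * V := by rw [Finset.sum_mul]
        _ = V := by rw [Wt_sum, one_mul]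
    have hΦlb : V - δ k < EE a₀ N π Φ := by
      rw [hΦdef, EE_succProb a₀ (nn k) N hkN π ε]
      exact hnn k
    by_contra hcon
    push_neg at hcon
    have h4 : δ k < t k * EE a₀ N π B := by
      rw [hδdef]
      exact (ENNReal.mul_lt_mul_iff_right (ht0 k) (httop k)).mpr hcon
    have h5 : (V - δ k) + δ k < EE a₀ N π Φ + t k * EE a₀ N π B :=
      ENNReal.add_lt_add hΦlb h4
    have h6 : V ≤ (V - δ k) + δ k := le_tsub_add
    exact lt_irrefl V (lt_of_le_of_lt h6 (lt_of_lt_of_le h5 hEE))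
  -- geometric bound on the total bad mass
  have hβsum : ∀ m, ∑ k ∈ Finset.range (m + 1), β k ≤ w0 * 2⁻¹ := by
    intro m
    have hpow : ∀ k : ℕ, β k = (w0 * 2⁻¹ ^ 2) * 2⁻¹ ^ k := by
      intro k
      rw [hβdef]
      ring
    calc ∑ k ∈ Finset.range (m + 1), β k
        = (w0 * 2⁻¹ ^ 2) * ∑ k ∈ Finset.range (m + 1), 2⁻¹ ^ k := by
          rw [Finset.mul_sum]
          exact Finset.sum_congr rfl fun k _ => hpow k
      _ ≤ (w0 * 2⁻¹ ^ 2) * 2 := by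
          refine mul_le_mul_right ?_ _
          calc ∑ k ∈ Finset.range (m + 1), (2⁻¹ : ℝ≥0∞) ^ k
              ≤ ∑' k : ℕ, (2⁻¹ : ℝ≥0∞) ^ k := ENNReal.sum_le_tsum _
            _ = (1 - 2⁻¹)⁻¹ := ENNReal.tsum_geometric 2⁻¹
            _ = 2 := by rw [ENNReal.one_sub_inv_two, inv_inv]
      _ = w0 * 2⁻¹ := by
          rw [mul_assoc]
          congr 1
          rw [sq]
          rw [mul_assoc, ENNReal.inv_mul_cancel (by norm_num) ENNReal.ofNat_ne_top, mul_one]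
  -- stage m : a single choice function good for all horizons k ≤ m
  have stage : ∀ m : ℕ, ∃ f : List (S × A) → A, (Pchain l f ∧ f l = x) ∧
      ∀ k, k ≤ m → V - t k ≤ succProb (nn k) (polF f) ε := by
    intro m
    set M := (Finset.range (m + 1)).sup nn with hM
    set N := l.length + 1 + M with hNdef
    have hNl : l.length < N := by omega
    have hNk : ∀ k, k ≤ m → nn k ≤ N := by
      intro k hk
      have : nn k ≤ M := Finset.le_sup (Finset.mem_range.mpr (by omega))
      omega
    set indG : (List (S × A) → A) → ℝ≥0∞ := fun f =>
      if (Pchain l f ∧ f l = x) ∧ (∀ k, k ≤ m → V - t k ≤ succProb (nn k) (polF f) ε)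
      then 1 else 0 with hindG
    set indB : ℕ → (List (S × A) → A) → ℝ≥0∞ := fun k f =>
      if succProb (nn k) (polF f) ε < V - t k then 1 else 0 with hindB
    have hpoint : ∀ f : List (S × A) → A,
        (if Pchain l f ∧ f l = x then (1 : ℝ≥0∞) else 0)
          ≤ indG f + ∑ k ∈ Finset.range (m + 1), indB k f := by
      intro f
      by_cases hPf : Pchain l f ∧ f l = x
      · by_cases hG : ∀ k, k ≤ m → V - t k ≤ succProb (nn k) (polF f) ε
        · have hg1 : indG f = 1 := by rw [hindG]; exact if_pos ⟨hPf, hG⟩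
          rw [if_pos hPf, hg1]
          exact le_add_right (le_refl 1)
        · push_neg at hG
          obtain ⟨k, hk, hlt⟩ := hG
          rw [if_pos hPf]
          have h1 : (1 : ℝ≥0∞) ≤ ∑ k' ∈ Finset.range (m + 1), indB k' f := by
            have : indB k f = 1 := by rw [hindB]; exact if_pos hlt
            calc (1 : ℝ≥0∞) = indB k f := this.symm
              _ ≤ ∑ k' ∈ Finset.range (m + 1), indB k' f :=
                Finset.single_le_sum (f := fun k' => indB k' f) (fun _ _ => zero_le)
                  (Finset.mem_range.mpr (Nat.lt_succ_of_le hk))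
          exact le_add_left h1
      · rw [if_neg hPf]; exact zero_le
    have hEEineq : EE a₀ N π (fun f => if Pchain l f ∧ f l = x then 1 else 0)
        ≤ EE a₀ N π indG + ∑ k ∈ Finset.range (m + 1), EE a₀ N π (indB k) := by
      have h1 : EE a₀ N π (fun f => if Pchain l f ∧ f l = x then 1 else 0)
          ≤ EE a₀ N π (fun f => indG f + ∑ k ∈ Finset.range (m + 1), indB k f) := by
        rw [EE, EE]
        exact Finset.sum_le_sum fun u _ => mul_le_mul_right (hpoint _) _
      refine le_trans h1 (le_of_eq ?_)
      rw [EE, EE]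
      calc ∑ u : Tr S A N, Wt N π u *
            (indG (toFun a₀ N u) + ∑ k ∈ Finset.range (m + 1), indB k (toFun a₀ N u))
          = ∑ u : Tr S A N, (Wt N π u * indG (toFun a₀ N u)
              + ∑ k ∈ Finset.range (m + 1), Wt N π u * indB k (toFun a₀ N u)) := by
            refine Finset.sum_congr rfl fun u _ => ?_
            rw [mul_add, Finset.mul_sum]
        _ = _ := by
            rw [Finset.sum_add_distrib]
            congr 1
            rw [Finset.sum_comm]
            exact Finset.sum_congr rfl fun k _ => rfl
    have hchain : w0 ≤ EE a₀ N π (fun f => if Pchain l f ∧ f l = x then 1 else 0) :=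
      EE_chain a₀ l x N hNl π
    have hG0 : EE a₀ N π indG ≠ 0 := by
      intro h0
      have h1 : w0 ≤ ∑ k ∈ Finset.range (m + 1), EE a₀ N π (indB k) := by
        have := le_trans hchain hEEineq
        rwa [h0, zero_add] at this
      have h2 : w0 ≤ w0 * 2⁻¹ :=
        le_trans h1 (le_trans (Finset.sum_le_sum fun k _ => hB k N (hNk k (by
          exact Nat.lt_succ_iff.mp (Finset.mem_range.mp ‹k ∈ Finset.range (m + 1)›)))) (hβsum m))
      have h3 : w0 * 2⁻¹ < w0 := by
        have := ENNReal.half_lt_self hw0 hwtop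
        rwa [ENNReal.div_eq_inv_mul, mul_comm] at this
      exact lt_irrefl w0 (lt_of_le_of_lt h2 h3)
    obtain ⟨u, hu⟩ : ∃ u : Tr S A N, Wt N π u * indG (toFun a₀ N u) ≠ 0 := by
      by_contra hall
      push_neg at hall
      exact hG0 (Finset.sum_eq_zero fun u _ => hall u)
    refine ⟨toFun a₀ N u, ?_⟩
    have h2 : indG (toFun a₀ N u) ≠ 0 := fun h => hu (by rw [h, mul_zero])
    rw [hindG] at h2
    by_cases hcond : (Pchain l (toFun a₀ N u) ∧ (toFun a₀ N u) l = x) ∧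
        ∀ k, k ≤ m → V - t k ≤ succProb (nn k) (polF (toFun a₀ N u)) ε
    · exact hcond
    · exact absurd (if_neg hcond) h2
  -- compactness: a single choice function good for all k
  letI : TopologicalSpace A := ⊥
  haveI : DiscreteTopology A := ⟨rfl⟩
  set C : ℕ → Set (List (S × A) → A) := fun m =>
    {f | (Pchain l f ∧ f l = x) ∧ ∀ k, k ≤ m → V - t k ≤ succProb (nn k) (polF f) ε}
    with hC
  have hdec : ∀ m, C (m + 1) ⊆ C m := fun m f hf => ⟨hf.1, fun k hk => hf.2 k (by omega)⟩
  have hne : ∀ m, (C m).Nonempty := by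
    intro m
    obtain ⟨f, h1, h2⟩ := stage m
    exact ⟨f, h1, h2⟩
  have hcont : ∀ n : ℕ, Continuous (fun f : List (S × A) → A => succProb n (polF f) ε) := by
    intro n
    haveI : Finite {h : List (S × A) // h.length < n} := by
      refine Finite.of_injective
        (fun h => (fun i : Fin n => (h.1)[(i : ℕ)]?)) ?_
      intro h h' hee
      have hl1 : h.1.length < n := h.2
      have hl2 : h'.1.length < n := h'.2
      refine Subtype.ext (List.ext_getElem? fun i => ?_)
      by_cases hi : i < n
      · exact congrFun hee ⟨i, hi⟩
      · rw [List.getElem?_eq_none (by omega), List.getElem?_eq_none (by omega)]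
    have hfactor : (fun f : List (S × A) → A => succProb n (polF f) ε)
        = (fun g : {h : List (S × A) // h.length < n} → A =>
            succProb n (polF (fun h => if hh : h.length < n then g ⟨h, hh⟩ else a₀)) ε)
          ∘ (fun (f : List (S × A) → A) (h : {h : List (S × A) // h.length < n}) => f h.1) := by
      funext f
      exact succProb_polF_local n f _ (fun h hh => by simp [hh]) ε
    rw [hfactor]
    exact continuous_of_discreteTopology.comp (continuous_pi fun h => continuous_apply h.1)
  have hclosed : ∀ m, IsClosed (C m) := by
    intro m
    have hCeq : C m = ({f : List (S × A) → A | Pchain l f} ∩ {f | f l = x}) ∩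
        ⋂ (k : ℕ), ⋂ (_ : k ≤ m),
          {f : List (S × A) → A | V - t k ≤ succProb (nn k) (polF f) ε} := by
      ext f
      simp only [hC, Set.mem_setOf_eq, Set.mem_inter_iff, Set.mem_iInter]
      try tauto
    rw [hCeq]
    refine IsClosed.inter (IsClosed.inter ?_ ?_) ?_
    · have : {f : List (S × A) → A | Pchain l f}
          = ⋂ (j : ℕ), ⋂ (p : S × A), ⋂ (_ : l[j]? = some p),
              {f : List (S × A) → A | f (l.take j) = p.2} := by
        ext f
        simp only [Set.mem_setOf_eq, Set.mem_iInter, Pchain]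
        try tauto
      rw [this]
      exact isClosed_iInter fun j => isClosed_iInter fun p => isClosed_iInter fun _ =>
        isClosed_eq (continuous_apply _) continuous_const
    · exact isClosed_eq (continuous_apply _) continuous_const
    · exact isClosed_iInter fun k => isClosed_iInter fun _ =>
        IsClosed.preimage (hcont (nn k)) isClosed_Ici
  obtain ⟨f, hf⟩ := IsCompact.nonempty_iInter_of_sequence_nonempty_isCompact_isClosed
    C hdec hne ((hclosed 0).isCompact) hclosed
  have hfC : ∀ m, f ∈ C m := fun m => Set.mem_iInter.mp hf m
  refine ⟨f, (hfC 0).1.1, (hfC 0).1.2, ?_⟩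
  have hval : ∀ k, V - t k ≤ value (polF f) ε := fun k =>
    le_trans ((hfC k).2 k (le_refl k)) (le_iSup (fun n => succProb n (polF f) ε) (nn k))
  by_contra hvlt
  push_neg at hvlt
  have hvne : V - value (polF f) ε ≠ 0 := by
    rw [Ne, tsub_eq_zero_iff_le]
    exact not_le.mpr hvlt
  obtain ⟨k, hk⟩ := ENNReal.exists_inv_two_pow_lt hvne
  have h1 : V ≤ value (polF f) ε + t k := tsub_le_iff_right.mp (hval k)
  have hvf1 : value (polF f) ε ≤ 1 := value_le_one _ _
  have hvftop : value (polF f) ε ≠ ⊤ := fun hh => by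
    rw [hh] at hvf1
    exact lt_irrefl _ (lt_of_le_of_lt hvf1 ENNReal.one_lt_top)
  have h2 : value (polF f) ε + t k < value (polF f) ε + (V - value (polF f) ε) :=
    ENNReal.add_lt_add_left hvftop hk
  have h3 : value (polF f) ε + (V - value (polF f) ε) = V := add_tsub_cancel_of_le hvlt.le
  rw [h3] at h2
  exact lt_irrefl V (lt_of_le_of_lt h1 h2)

end NUO
namespace NUO

open scoped Classical
set_option linter.unusedSectionVars false
variable {S A : Type} [Fintype S] [Fintype A]

lemma beh_polF (s₀ : S) : ∀ (l : List (S × A)) (f : List (S × A) → A), Pchain l f → ∀ c : A,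
    (polF f).beh (l.map Prod.fst ++ [s₀]) (l.map Prod.snd ++ [c])
      = if c = f l then 1 else 0 := by
  intro l
  induction l with
  | nil =>
    intro f _ c
    show (polF f).out (polF f).init c * ((polF f).evolve s₀ c).beh [] [] = _
    rw [show ((polF f).evolve s₀ c).beh [] [] = 1 from rfl, mul_one]
    rfl
  | cons q l ih =>
    intro f hP c
    have h0 : f [] = q.2 := hP 0 q (by simp)
    have hP' : Pchain l (subAt q f) := fun j p hp => hP (j + 1) p (by simpa using hp)
    show (polF f).out (polF f).init q.2 *
        ((polF f).evolve q.1 q.2).beh (l.map Prod.fst ++ [s₀]) (l.map Prod.snd ++ [c]) = _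
    rw [polF_evolve_beh, ih (subAt q f) hP' c]
    have hone : (polF f).out (polF f).init q.2 = 1 := by
      show (if q.2 = f [] then (1 : ℝ≥0∞) else 0) = 1
      rw [if_pos h0.symm]
    rw [hone, one_mul]
    rfl

end NUO

/-- **Non-deterministic optimal policies are never uniquely optimal.** If a
non-deterministic policy `π` is optimal for a teleo-environment `ε`, then there
exist two behaviourally distinct deterministic policies that are also optimal
for `ε`; in particular `π` is not uniquely optimal for `ε`. -/
theorem nondeterministic_not_uniquely_optimal
    {S A : Type} [Fintype S] [Fintype A]
    (π : Policy S A) (ε : Env S A)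
    (hnd : Nondeterministic π) (hopt : Optimal π ε) :
    (∃ π₁ π₂ : Policy S A, π₁.Deterministic ∧ π₂.Deterministic ∧
      ¬ π₁.BehEq π₂ ∧ Optimal π₁ ε ∧ Optimal π₂ ε) ∧
    ¬ UniquelyOptimal π ε := by
  classical
  obtain ⟨st, hre, a, b, hab, ha, hb⟩ := hnd
  have hS : Nonempty S := by
    by_contra hS
    rw [not_nonempty_iff] at hS
    have h0 := ε.out_sum ε.init
    haveI : IsEmpty (S × Bool) := by infer_instance
    rw [Finset.univ_eq_empty, Finset.sum_empty] at h0
    exact zero_ne_one h0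
  obtain ⟨s₀⟩ := hS
  have hex : ∃ π₁ π₂ : Policy S A, π₁.Deterministic ∧ π₂.Deterministic ∧
      ¬ π₁.BehEq π₂ ∧ Optimal π₁ ε ∧ Optimal π₂ ε := by
    by_cases hV0 : value π ε = 0
    · -- degenerate case: every policy is optimal
      refine ⟨NUO.polF (fun _ => a), NUO.polF (fun _ => b), NUO.polF_det _, NUO.polF_det _,
        ?_, ?_, ?_⟩
      · intro hBE
        have h1 := hBE [s₀] [a]
        have e1 : (NUO.polF (fun _ : List (S × A) => a)).beh [s₀] [a] = 1 := by
          simpa using NUO.beh_polF s₀ [] (fun _ => a) (NUO.Pchain_nil _) a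
        have e2 : (NUO.polF (fun _ : List (S × A) => b)).beh [s₀] [a] = 0 := by
          simpa [hab] using NUO.beh_polF s₀ [] (fun _ => b) (NUO.Pchain_nil _) a
        rw [e1, e2] at h1
        exact one_ne_zero h1
      · intro π'; exact le_trans (le_trans (hopt π') (le_of_eq hV0)) zero_le
      · intro π'; exact le_trans (le_trans (hopt π') (le_of_eq hV0)) zero_le
    · obtain ⟨l, hl, hwl⟩ := NUO.reach_path π hre
      have houta : π.out (π.stepSeq π.init l) a ≠ 0 := by rw [hl]; exact ha
      have houtb : π.out (π.stepSeq π.init l) b ≠ 0 := by rw [hl]; exact hb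
      obtain ⟨f₁, hP₁, hx₁, hv₁⟩ :=
        NUO.exists_good π ε hopt hV0 l a (mul_ne_zero hwl houta)
      obtain ⟨f₂, hP₂, hx₂, hv₂⟩ :=
        NUO.exists_good π ε hopt hV0 l b (mul_ne_zero hwl houtb)
      refine ⟨NUO.polF f₁, NUO.polF f₂, NUO.polF_det _, NUO.polF_det _, ?_, ?_, ?_⟩
      · intro hBE
        have h1 := hBE (l.map Prod.fst ++ [s₀]) (l.map Prod.snd ++ [a])
        rw [NUO.beh_polF s₀ l f₁ hP₁ a, NUO.beh_polF s₀ l f₂ hP₂ a] at h1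
        rw [if_pos hx₁.symm, if_neg (by rw [hx₂]; exact hab)] at h1
        exact one_ne_zero h1
      · intro π'; exact le_trans (hopt π') hv₁
      · intro π'; exact le_trans (hopt π') hv₂
  refine ⟨hex, ?_⟩
  rintro ⟨-, hu⟩
  obtain ⟨π₁, π₂, hd₁, hd₂, hne, ho₁, ho₂⟩ := hex
  have e₁ := hu π₁ ho₁
  have e₂ := hu π₂ ho₂
  exact hne fun is os => (e₁ is os).trans (e₂ is os).symm
end
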